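/- arXiv:2505.11789 — 4 statements merged into one kernel-verified Lean document; each statement's English description precedes it below -/
import Mathlib

section
/- Let f ∈ L¹(ℝ) be such that ‖f - T_h f‖₂² = O(|h|^{1+α}) as h → 0, for some α > 0, where (T_h f)(u) = f(u+h) is translation. Then the Fourier transform of f belongs to L¹(ℝ). -/
open MeasureTheory Complex FourierTransform
open scoped Real ENNReal

lemma gaussFT {ε : ℝ} (hε : 0 < ε) (x : ℝ) :
    ∫ t : ℝ, cexp (I * x * t) * cexp (-(ε:ℂ) * t ^ 2)
      = (Real.sqrt (π / ε) : ℂ) * cexp (-(x:ℂ) ^ 2 / (4 * ε)) := by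
  have h := fourierIntegral_gaussian (b := (ε:ℂ)) (by simpa using hε) (x : ℂ)
  rw [h]
  congr 1
  have h2 : ((π/ε : ℝ) : ℂ) = (π : ℂ)/(ε:ℂ) := by push_cast; ring
  have h3 : ((1/2 : ℝ) : ℂ) = (1/2 : ℂ) := by norm_num
  rw [← h2, ← h3, ← Complex.ofReal_cpow (by positivity) (1/2:ℝ), Real.sqrt_eq_rpow]

lemma contFT (g : ℝ → ℂ) (hg : Integrable g volume) : Continuous (𝓕 g) := by
  exact VectorFourier.fourierIntegral_continuous Real.continuous_fourierChar
    (by exact continuous_inner) hg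

lemma normFT_le (g : ℝ → ℂ) (t : ℝ) : ‖𝓕 g t‖ ≤ ∫ s, ‖g s‖ :=
  VectorFourier.norm_fourierIntegral_le_integral_norm _ _ _ _ _

-- kernel integral
lemma K_integral {ε : ℝ} (hε : 0 < ε) :
    ∫ x : ℝ, Real.sqrt (π/ε) * Real.exp (-(π^2/ε) * x^2) = 1 := by
  rw [MeasureTheory.integral_const_mul, integral_gaussian]
  rw [← Real.sqrt_mul (by positivity)]
  have : π / ε * (π / (π ^ 2 / ε)) = 1 := by
    field_simp
  rw [this, Real.sqrt_one]

-- combined exponential identity for the inner t-integral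
lemma innerT {ε : ℝ} (hε : 0 < ε) (s u : ℝ) :
    ∫ t : ℝ, (Real.exp (-(ε*t^2)) : ℂ) * cexp (↑(-2*π*s*t) * I) * cexp (↑(2*π*u*t)*I)
      = (Real.sqrt (π/ε) * Real.exp (-(π^2/ε) * (u-s)^2) : ℝ) := by
  have h : ∀ t : ℝ, (Real.exp (-(ε*t^2)) : ℂ) * cexp (↑(-2*π*s*t) * I) * cexp (↑(2*π*u*t)*I)
      = cexp (I * ((2*π*(u-s) : ℝ) : ℂ) * (t:ℂ)) * cexp (-(ε:ℂ) * (t:ℂ)^2) := by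
    intro t
    rw [Complex.ofReal_exp, ← Complex.exp_add, ← Complex.exp_add, ← Complex.exp_add]
    congr 1
    push_cast
    ring
  simp_rw [h]
  rw [gaussFT hε (2*π*(u-s))]
  have h2 : (-((2*π*(u-s) : ℝ) : ℂ)^2/(4*ε)) = ((-(π^2/ε) * (u-s)^2 : ℝ) : ℂ) := by
    push_cast
    field_simp
    ring
  rw [h2, ← Complex.ofReal_exp, ← Complex.ofReal_mul]

lemma gauss_planch (g : ℝ → ℂ) (hg : Integrable g volume) (hε : 0 < ε) :
    ∫⁻ t : ℝ, ENNReal.ofReal (Real.exp (-(ε * t^2)) * ‖𝓕 g t‖^2)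
      ≤ ∫⁻ s : ℝ, (‖g s‖₊ : ℝ≥0∞)^2 := by
  set W : ℝ → ℝ := fun t => Real.exp (-(ε * t^2)) with hW
  set A : ℝ → ℂ := 𝓕 g with hA
  set K : ℝ → ℝ := fun x => Real.sqrt (π/ε) * Real.exp (-(π^2/ε) * x^2) with hKdef
  have hKnn : ∀ x, 0 ≤ K x := fun x => by positivity
  have hKle : ∀ x, K x ≤ Real.sqrt (π/ε) := by
    intro x
    have : Real.exp (-(π^2/ε) * x^2) ≤ 1 := by
      rw [Real.exp_le_one_iff]
      have h0 : 0 ≤ (π^2/ε) * x^2 := by positivity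
      linarith
    simpa [hKdef] using mul_le_of_le_one_right (Real.sqrt_nonneg (π/ε)) this
  set M : ℝ := ∫ s, ‖g s‖ with hM
  have hM0 : 0 ≤ M := integral_nonneg (fun s => norm_nonneg _)
  have hAc : Continuous A := contFT g hg
  have hAb : ∀ t, ‖A t‖ ≤ M := fun t => normFT_le g t
  have hWc : Continuous W := by fun_prop
  have hWpos : ∀ t, 0 < W t := fun t => Real.exp_pos _
  have hWle : ∀ t, W t ≤ 1 := fun t => Real.exp_le_one_iff.2 (by nlinarith [sq_nonneg t])
  have hWint : Integrable W volume := by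
    simpa [hW, neg_mul] using integrable_exp_neg_mul_sq hε
  -- integrability of LHS integrand
  have hInt : Integrable (fun t => W t * ‖A t‖^2) volume := by
    apply Integrable.mono (hWint.const_mul (M^2))
    · exact (hWc.mul ((hAc.norm).pow 2)).aestronglyMeasurable
    · filter_upwards with t
      have h1 : ‖A t‖^2 ≤ M^2 := by nlinarith [norm_nonneg (A t), hAb t]
      have := (hWpos t).le
      rw [Real.norm_eq_abs, Real.norm_eq_abs, _root_.abs_of_nonneg (by positivity : (0:ℝ) ≤ W t * ‖A t‖^2),
        _root_.abs_of_nonneg (by positivity : (0:ℝ) ≤ M^2 * W t)]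
      nlinarith
  -- the complex integral J
  set J : ℂ := ∫ t : ℝ, ((W t : ℂ)) * ((starRingEnd ℂ) (A t) * A t) with hJ
  have hJ_eq : J = ((∫ t, W t * ‖A t‖^2 : ℝ) : ℂ) := by
    rw [show ((∫ t, W t * ‖A t‖^2 : ℝ) : ℂ) = ∫ t, ((W t * ‖A t‖^2 : ℝ) : ℂ) from integral_ofReal.symm]
    rw [hJ]
    congr 1
    funext t
    rw [Complex.conj_mul']
    push_cast
    ring
  -- step: expand A and conj A, Fubini twice
  have hJ2 : J = ∫ p : ℝ × ℝ, g p.1 * ((starRingEnd ℂ) (g p.2) * (K (p.2 - p.1) : ℂ)) := by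
    have hA_def : ∀ t : ℝ, A t = ∫ s : ℝ, cexp (↑(-2*π*s*t) * I) * g s := by
      intro t
      rw [hA, Real.fourier_real_eq_integral_exp_smul]
      simp only [smul_eq_mul]
    have hconjA : ∀ t : ℝ, (starRingEnd ℂ) (A t)
        = ∫ u : ℝ, cexp (↑(2*π*u*t) * I) * (starRingEnd ℂ) (g u) := by
      intro t
      rw [hA_def t, ← integral_conj]
      congr 1
      funext u
      rw [map_mul, ← Complex.exp_conj, map_mul, Complex.conj_ofReal, Complex.conj_I]
      congr 2
      push_cast
      ring
    -- first Fubini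
    set F : ℝ → ℝ → ℂ := fun t s =>
      (↑(W t) * (starRingEnd ℂ) (A t)) * (cexp (↑(-2*π*s*t) * I) * g s) with hF
    have hFmeas : AEStronglyMeasurable (Function.uncurry F) (volume.prod volume) := by
      apply AEStronglyMeasurable.mul
      · exact ((Complex.continuous_ofReal.comp (hWc.comp continuous_fst)).mul
          (continuous_conj.comp (hAc.comp continuous_fst))).aestronglyMeasurable
      · apply AEStronglyMeasurable.mul
        · exact (Complex.continuous_exp.comp
            ((Complex.continuous_ofReal.comp (by fun_prop)).mul continuous_const)).aestronglyMeasurable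
        · exact hg.1.comp_snd
    have hFint : Integrable (Function.uncurry F) (volume.prod volume) := by
      apply Integrable.mono ((hWint.const_mul M).mul_prod hg.norm) hFmeas
      filter_upwards with p
      simp only [Function.uncurry, hF, norm_mul, Complex.norm_real, Real.norm_eq_abs,
        Complex.norm_exp_ofReal_mul_I, RCLike.norm_conj, one_mul, norm_norm, abs_norm]
      rw [_root_.abs_of_nonneg (hWpos p.1).le, _root_.abs_of_nonneg hM0,
        mul_comm M (W p.1)]
      exact mul_le_mul_of_nonneg_right
        (mul_le_mul_of_nonneg_left (hAb p.1) (hWpos p.1).le) (norm_nonneg _)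
    have step_a : J = ∫ t : ℝ, ∫ s : ℝ, F t s := by
      rw [hJ]
      congr 1
      funext t
      rw [show (∫ s : ℝ, F t s)
          = (↑(W t) * (starRingEnd ℂ) (A t)) * ∫ s : ℝ, cexp (↑(-2*π*s*t) * I) * g s
          from MeasureTheory.integral_const_mul _ _, ← hA_def t]
      ring
    have step_b : J = ∫ s : ℝ, ∫ t : ℝ, F t s := step_a.trans (integral_integral_swap hFint)
    -- inner integral, for fixed s
    have hInner : ∀ s : ℝ, (∫ t : ℝ, F t s)
        = (∫ u : ℝ, (starRingEnd ℂ) (g u) * (K (u - s) : ℂ)) * g s := by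
      intro s
      have e1 : (∫ t : ℝ, F t s)
          = (∫ t : ℝ, (↑(W t) * (starRingEnd ℂ) (A t)) * cexp (↑(-2*π*s*t) * I)) * g s := by
        rw [← integral_mul_const]
        congr 1
        funext t
        rw [hF]
        ring
      rw [e1]
      congr 1
      -- expand conj A and swap again
      set H : ℝ → ℝ → ℂ := fun t u =>
        (↑(W t) * cexp (↑(-2*π*s*t) * I)) * (cexp (↑(2*π*u*t) * I) * (starRingEnd ℂ) (g u)) with hH
      have hHmeas : AEStronglyMeasurable (Function.uncurry H) (volume.prod volume) := by
        apply AEStronglyMeasurable.mul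
        · exact ((Complex.continuous_ofReal.comp (hWc.comp continuous_fst)).mul
            (Complex.continuous_exp.comp
              ((Complex.continuous_ofReal.comp (by fun_prop)).mul continuous_const))).aestronglyMeasurable
        · apply AEStronglyMeasurable.mul
          · exact (Complex.continuous_exp.comp
              ((Complex.continuous_ofReal.comp (by fun_prop)).mul continuous_const)).aestronglyMeasurable
          · exact (continuous_conj.comp_aestronglyMeasurable hg.1.comp_snd)
      have hHint : Integrable (Function.uncurry H) (volume.prod volume) := by
        apply Integrable.mono (hWint.mul_prod hg.norm) hHmeas
        filter_upwards with p
        simp only [Function.uncurry, hH, norm_mul, Complex.norm_real, Real.norm_eq_abs,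
          Complex.norm_exp_ofReal_mul_I, RCLike.norm_conj, one_mul, mul_one, norm_norm, abs_norm]
        rw [_root_.abs_of_nonneg (hWpos p.1).le]
      have e2 : (∫ t : ℝ, (↑(W t) * (starRingEnd ℂ) (A t)) * cexp (↑(-2*π*s*t) * I))
          = ∫ t : ℝ, ∫ u : ℝ, H t u := by
        congr 1
        funext t
        rw [show (↑(W t) * (starRingEnd ℂ) (A t)) * cexp (↑(-2*π*s*t) * I)
            = (↑(W t) * cexp (↑(-2*π*s*t) * I)) * (starRingEnd ℂ) (A t) from by ring,
          hconjA t, ← MeasureTheory.integral_const_mul]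
      rw [e2, integral_integral_swap hHint]
      congr 1
      funext u
      have e3 : ∀ t : ℝ, H t u
          = ((↑(W t) * cexp (↑(-2*π*s*t) * I)) * cexp (↑(2*π*u*t) * I)) * (starRingEnd ℂ) (g u) := by
        intro t
        rw [hH]
        ring
      simp_rw [e3]
      rw [integral_mul_const]
      rw [show (∫ t : ℝ, ↑(W t) * cexp (↑(-2*π*s*t) * I) * cexp (↑(2*π*u*t) * I))
          = ((K (u - s) : ℝ) : ℂ) from by
        rw [← innerT hε s u]]
      ring
    simp_rw [step_b, hInner]
    -- final: iterated to product integral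
    have e4 : ∀ s : ℝ, (∫ u : ℝ, (starRingEnd ℂ) (g u) * (K (u - s) : ℂ)) * g s
        = ∫ u : ℝ, g s * ((starRingEnd ℂ) (g u) * (K (u - s) : ℂ)) := by
      intro s
      rw [show (∫ u : ℝ, g s * ((starRingEnd ℂ) (g u) * (K (u - s) : ℂ)))
          = g s * ∫ u : ℝ, (starRingEnd ℂ) (g u) * (K (u - s) : ℂ)
          from MeasureTheory.integral_const_mul _ _]
      exact mul_comm _ _
    simp_rw [e4]
    have hGmeas : AEStronglyMeasurable
        (Function.uncurry fun s u => g s * ((starRingEnd ℂ) (g u) * (K (u - s) : ℂ)))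
        (volume.prod volume) := by
      apply AEStronglyMeasurable.mul
      · exact hg.1.comp_fst
      · apply AEStronglyMeasurable.mul
        · exact (continuous_conj.comp_aestronglyMeasurable hg.1.comp_snd)
        · have hKc : Continuous K := by rw [hKdef]; fun_prop
          exact (Complex.continuous_ofReal.comp
            (hKc.comp (continuous_snd.sub continuous_fst))).aestronglyMeasurable
    have hGint : Integrable
        (Function.uncurry fun s u => g s * ((starRingEnd ℂ) (g u) * (K (u - s) : ℂ)))
        (volume.prod volume) := by
      apply Integrable.mono (hg.norm.mul_prod (hg.norm.const_mul (Real.sqrt (π/ε)))) hGmeas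
      filter_upwards with p
      simp only [Function.uncurry, norm_mul, Complex.norm_real, Real.norm_eq_abs,
        RCLike.norm_conj, norm_norm, abs_norm]
      rw [_root_.abs_of_nonneg (hKnn _), _root_.abs_of_nonneg (Real.sqrt_nonneg (π/ε))]
      have h2 : ‖g p.2‖ * K (p.2 - p.1) ≤ ‖g p.2‖ * Real.sqrt (π/ε) :=
        mul_le_mul_of_nonneg_left (hKle _) (norm_nonneg _)
      exact mul_le_mul_of_nonneg_left (h2.trans_eq (mul_comm _ _)) (norm_nonneg _)
    rw [integral_integral hGint, ← Measure.volume_eq_prod]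
  -- bound ‖J‖
  have hJb : ‖J‖ ≤ (∫⁻ p : ℝ × ℝ, (‖g p.1‖₊ : ℝ≥0∞) * ((‖g p.2‖₊ : ℝ≥0∞) *
      ENNReal.ofReal (K (p.2 - p.1))) ∂(volume.prod volume)).toReal := by
    rw [hJ2]
    refine le_trans (norm_integral_le_lintegral_norm _) (le_of_eq ?_)
    rw [Measure.volume_eq_prod]
    congr 1
    apply lintegral_congr
    intro p
    simp only [norm_mul, RCLike.norm_conj, Complex.norm_real, Real.norm_eq_abs]
    rw [_root_.abs_of_nonneg (hKnn _), ENNReal.ofReal_mul (norm_nonneg _),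
      ENNReal.ofReal_mul (norm_nonneg _), ofReal_norm, enorm_eq_nnnorm,
      ofReal_norm, enorm_eq_nnnorm]
  -- Cauchy-Schwarz on the product
  have hCS : (∫⁻ p : ℝ × ℝ, (‖g p.1‖₊ : ℝ≥0∞) * ((‖g p.2‖₊ : ℝ≥0∞) *
      ENNReal.ofReal (K (p.2 - p.1))) ∂(volume.prod volume))
      ≤ ∫⁻ s : ℝ, (‖g s‖₊ : ℝ≥0∞)^2 := by
    have hKc : Continuous K := by
      rw [hKdef]; fun_prop
    have hKint : Integrable K volume := by
      rw [hKdef]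
      exact (integrable_exp_neg_mul_sq (by positivity)).const_mul _
    set k : ℝ × ℝ → ℝ≥0∞ := fun p => ENNReal.ofReal (K (p.2 - p.1)) with hk
    have hkm : Measurable k :=
      ENNReal.measurable_ofReal.comp ((hKc.comp (continuous_snd.sub continuous_fst)).measurable)
    have hg1 : AEMeasurable (fun p : ℝ × ℝ => (‖g p.1‖₊ : ℝ≥0∞)) (volume.prod volume) :=
      hg.1.comp_fst.enorm
    have hg2 : AEMeasurable (fun p : ℝ × ℝ => (‖g p.2‖₊ : ℝ≥0∞)) (volume.prod volume) :=
      hg.1.comp_snd.enorm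
    set φ : ℝ × ℝ → ℝ≥0∞ := fun p => (‖g p.1‖₊ : ℝ≥0∞) * k p ^ (1/2 : ℝ) with hφ
    set ψ : ℝ × ℝ → ℝ≥0∞ := fun p => (‖g p.2‖₊ : ℝ≥0∞) * k p ^ (1/2 : ℝ) with hψ
    have hφm : AEMeasurable φ (volume.prod volume) :=
      hg1.mul (hkm.aemeasurable.pow aemeasurable_const)
    have hψm : AEMeasurable ψ (volume.prod volume) :=
      hg2.mul (hkm.aemeasurable.pow aemeasurable_const)
    have hkhalf : ∀ p, k p ^ (1/2 : ℝ) * k p ^ (1/2 : ℝ) = k p := by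
      intro p
      rw [← ENNReal.rpow_add_of_nonneg (1/2) (1/2) (by norm_num) (by norm_num)]
      norm_num
    have hfact : ∀ p : ℝ × ℝ, (‖g p.1‖₊ : ℝ≥0∞) * ((‖g p.2‖₊ : ℝ≥0∞) * k p) = φ p * ψ p := by
      intro p
      rw [hφ, hψ]
      dsimp only
      rw [mul_mul_mul_comm, hkhalf, mul_assoc]
    have hconj : Real.HolderConjugate 2 2 := Real.HolderConjugate.two_two
    have sq_eq : ∀ (a : ℝ≥0∞) (p : ℝ × ℝ), (a * k p ^ (1/2:ℝ)) ^ (2:ℝ) = a ^ 2 * k p := by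
      intro a p
      rw [ENNReal.mul_rpow_of_nonneg _ _ (by norm_num : (0:ℝ) ≤ 2),
        ← ENNReal.rpow_mul]
      norm_num
    have hKone : ∀ s : ℝ, ∫⁻ u : ℝ, ENNReal.ofReal (K (u - s)) = 1 := by
      intro s
      rw [← ofReal_integral_eq_lintegral_ofReal (hKint.comp_sub_right s)
        (Filter.Eventually.of_forall (fun u => hKnn _)),
        integral_sub_right_eq_self (fun x => K x) s]
      rw [show (∫ x, K x) = 1 from by rw [hKdef]; exact K_integral hε]
      exact ENNReal.ofReal_one
    have hKone' : ∀ u : ℝ, ∫⁻ s : ℝ, ENNReal.ofReal (K (u - s)) = 1 := by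
      intro u
      have : ∀ s : ℝ, K (u - s) = K (s - u) := by
        intro s
        rw [hKdef]
        dsimp only
        rw [show (u-s)^2 = (s-u)^2 from by ring]
      simp_rw [this]
      exact hKone u
    have hφ2 : ∫⁻ p : ℝ × ℝ, φ p ^ (2:ℝ) ∂(volume.prod volume) = ∫⁻ s : ℝ, (‖g s‖₊ : ℝ≥0∞)^2 := by
      have : ∀ p : ℝ × ℝ, φ p ^ (2:ℝ) = (‖g p.1‖₊ : ℝ≥0∞)^2 * k p := fun p => sq_eq _ p
      simp_rw [this]
      rw [lintegral_prod (fun p : ℝ × ℝ => (‖g p.1‖₊ : ℝ≥0∞)^2 * k p) ((hg1.pow aemeasurable_const).mul hkm.aemeasurable)]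
      have : ∀ s : ℝ, (∫⁻ u : ℝ, (‖g s‖₊ : ℝ≥0∞)^2 * k (s, u)) = (‖g s‖₊ : ℝ≥0∞)^2 := by
        intro s
        rw [lintegral_const_mul' _ _ (ENNReal.pow_ne_top ENNReal.coe_ne_top)]
        rw [show (∫⁻ u : ℝ, k (s, u)) = 1 from hKone s, mul_one]
      simp_rw [this]
    have hψ2 : ∫⁻ p : ℝ × ℝ, ψ p ^ (2:ℝ) ∂(volume.prod volume) = ∫⁻ s : ℝ, (‖g s‖₊ : ℝ≥0∞)^2 := by
      have : ∀ p : ℝ × ℝ, ψ p ^ (2:ℝ) = (‖g p.2‖₊ : ℝ≥0∞)^2 * k p := fun p => sq_eq _ p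
      simp_rw [this]
      rw [lintegral_prod_symm (fun p : ℝ × ℝ => (‖g p.2‖₊ : ℝ≥0∞)^2 * k p) ((hg2.pow aemeasurable_const).mul hkm.aemeasurable)]
      have : ∀ u : ℝ, (∫⁻ s : ℝ, (‖g u‖₊ : ℝ≥0∞)^2 * k (s, u)) = (‖g u‖₊ : ℝ≥0∞)^2 := by
        intro u
        rw [lintegral_const_mul' _ _ (ENNReal.pow_ne_top ENNReal.coe_ne_top)]
        rw [show (∫⁻ s : ℝ, k (s, u)) = 1 from hKone' u, mul_one]
      simp_rw [this]
    calc ∫⁻ p : ℝ × ℝ, (‖g p.1‖₊ : ℝ≥0∞) * ((‖g p.2‖₊ : ℝ≥0∞) * k p) ∂(volume.prod volume)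
        = ∫⁻ p : ℝ × ℝ, (φ * ψ) p ∂(volume.prod volume) := by
          apply lintegral_congr
          intro p
          exact hfact p
      _ ≤ (∫⁻ p, φ p ^ (2:ℝ) ∂(volume.prod volume)) ^ (1/(2:ℝ)) *
          (∫⁻ p, ψ p ^ (2:ℝ) ∂(volume.prod volume)) ^ (1/(2:ℝ)) :=
          ENNReal.lintegral_mul_le_Lp_mul_Lq _ hconj hφm hψm
      _ = (∫⁻ s : ℝ, (‖g s‖₊ : ℝ≥0∞)^2) ^ (1/(2:ℝ)) * (∫⁻ s : ℝ, (‖g s‖₊ : ℝ≥0∞)^2) ^ (1/(2:ℝ)) := by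
          rw [hφ2, hψ2]
      _ = ∫⁻ s : ℝ, (‖g s‖₊ : ℝ≥0∞)^2 := by
          rw [← ENNReal.rpow_add_of_nonneg _ _ (by norm_num) (by norm_num)]
          norm_num
  -- assemble
  have h1 : ∫⁻ t : ℝ, ENNReal.ofReal (W t * ‖A t‖^2) = ENNReal.ofReal (∫ t, W t * ‖A t‖^2) := by
    rw [ofReal_integral_eq_lintegral_ofReal hInt]
    filter_upwards with t
    positivity
  rw [h1]
  have h2 : (∫ t, W t * ‖A t‖^2) = ‖J‖ := by
    rw [hJ_eq, Complex.norm_real, Real.norm_of_nonneg (integral_nonneg (fun t => by positivity))]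
  rw [h2]
  calc ENNReal.ofReal ‖J‖ ≤ ENNReal.ofReal ((∫⁻ p : ℝ × ℝ, (‖g p.1‖₊ : ℝ≥0∞) * ((‖g p.2‖₊ : ℝ≥0∞) *
      ENNReal.ofReal (K (p.2 - p.1))) ∂(volume.prod volume)).toReal) := ENNReal.ofReal_le_ofReal hJb
    _ ≤ _ := le_trans ENNReal.ofReal_toReal_le hCS

lemma ftSub (f : ℝ → ℂ) (hf : Integrable f volume) (h t : ℝ) :
    𝓕 (fun u => f u - f (u + h)) t = (1 - (Real.fourierChar (h * t) : ℂ)) * 𝓕 f t := by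
  have h1 : 𝓕 (fun u => f (u + h)) t = (Real.fourierChar (h * t) : ℂ) * 𝓕 f t := by
    have h0 := congrFun
      (VectorFourier.fourierIntegral_comp_add_right 𝐞 volume (innerₗ ℝ) f h) t
    have : (f ∘ fun v => v + h) = fun u => f (u + h) := rfl
    rw [this] at h0
    have hInner : (innerₗ ℝ) h t = h * t := by
      simp [RCLike.inner_apply]
      ring
    rw [hInner] at h0
    rw [show (𝓕 (fun u => f (u + h)) t)
        = VectorFourier.fourierIntegral 𝐞 volume (innerₗ ℝ) (fun u => f (u + h)) t from rfl, h0,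
      Circle.smul_def]
    rfl
  have h2 : 𝓕 (fun u => f u - f (u + h)) t = 𝓕 f t - 𝓕 (fun u => f (u + h)) t := by
    rw [Real.fourier_real_eq, Real.fourier_real_eq, Real.fourier_real_eq,
      ← integral_sub]
    · congr 1
      funext v
      rw [smul_sub]
    · exact by simpa [RCLike.inner_apply, mul_comm] using (Real.fourierIntegral_convergent_iff t).2 hf
    · exact by simpa [RCLike.inner_apply, mul_comm] using (Real.fourierIntegral_convergent_iff t).2 (hf.comp_add_right h)
  rw [h2, h1]
  ring

lemma norm_one_sub_char (θ : ℝ) :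
    ‖(1:ℂ) - (Real.fourierChar θ : ℂ)‖^2 = 2 - 2 * Real.cos (2 * π * θ) := by
  rw [Real.fourierChar_apply]
  set φ := 2 * π * θ with hφ
  have hre : ((1:ℂ) - cexp (↑φ * I)).re = 1 - Real.cos φ := by
    simp [Complex.exp_ofReal_mul_I_re]
  have him : ((1:ℂ) - cexp (↑φ * I)).im = -Real.sin φ := by
    simp [Complex.exp_ofReal_mul_I_im]
  rw [Complex.sq_norm, Complex.normSq_apply, hre, him]
  nlinarith [Real.sin_sq_add_cos_sq φ]

lemma FT_integrable (f : ℝ → ℂ) (hf : Integrable f volume) (α : ℝ) (hα : 0 < α)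
    (C' : ℝ) (hC' : 0 ≤ C')
    (hb2 : ∀ h : ℝ, ∫⁻ u : ℝ, (‖f u - f (u + h)‖₊ : ℝ≥0∞)^2
      ≤ ENNReal.ofReal (C' * |h| ^ (1 + α))) :
    Integrable (𝓕 f) volume := by
  have hFc : Continuous (𝓕 f) := contFT f hf
  have hFmeas : Measurable fun t => (‖𝓕 f t‖₊ : ℝ≥0∞) :=
    hFc.measurable.nnnorm.coe_nnreal_ennreal
  set Sn : ℕ → Set ℝ := fun n => (fun t : ℝ => |t|) ⁻¹' (Set.Ico ((2:ℝ)^n) ((2:ℝ)^(n+1)))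
    with hSn
  have hSmeas : ∀ n, MeasurableSet (Sn n) := fun n =>
    measurableSet_Ico.preimage continuous_abs.measurable
  have hSvol : ∀ n, volume (Sn n) ≤ ENNReal.ofReal ((2:ℝ)^(n+2)) := by
    intro n
    have hsub : Sn n ⊆ Set.Ioo (-((2:ℝ)^(n+1))) ((2:ℝ)^(n+1)) := by
      intro t ht
      obtain ⟨_, ht2⟩ := ht
      exact abs_lt.1 ht2
    refine le_trans (measure_mono hsub) ?_
    rw [Real.volume_Ioo]
    apply ENNReal.ofReal_le_ofReal
    rw [show ((2:ℝ)^(n+2)) = 2^(n+1) + 2^(n+1) from by ring]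
    ring_nf
    linarith []
  have hScover : {t : ℝ | 1 ≤ |t|} ⊆ ⋃ n, Sn n := by
    intro t ht
    have ht : (1:ℝ) ≤ |t| := ht
    have hx : (0:ℝ) < |t| := lt_of_lt_of_le one_pos ht
    set n := ⌊Real.logb 2 |t|⌋₊ with hn
    refine Set.mem_iUnion.2 ⟨n, ?_, ?_⟩
    · have hl : (2:ℝ) ^ ((n : ℝ)) ≤ (2:ℝ) ^ (Real.logb 2 |t|) :=
        Real.rpow_le_rpow_of_exponent_le (by norm_num)
          (Nat.floor_le (Real.logb_nonneg (by norm_num) ht))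
      rw [Real.rpow_logb two_pos (by norm_num) hx, Real.rpow_natCast] at hl
      exact hl
    · have hl : (2:ℝ) ^ (Real.logb 2 |t|) < (2:ℝ) ^ (((n+1 : ℕ) : ℝ)) := by
        apply Real.rpow_lt_rpow_of_exponent_lt (by norm_num)
        push_cast
        exact Nat.lt_floor_add_one _
      rw [Real.rpow_logb two_pos (by norm_num) hx, Real.rpow_natCast] at hl
      exact hl
  -- L² bound on each annulus
  have annL2 : ∀ n : ℕ, ∫⁻ t in Sn n, (‖𝓕 f t‖₊ : ℝ≥0∞)^2
      ≤ ENNReal.ofReal ((Real.exp 1 / 2) * (C' * (((2:ℝ)^(n+2))⁻¹) ^ (1+α))) := by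
    intro n
    set hh : ℝ := ((2:ℝ)^(n+2))⁻¹ with hhh
    have hh0 : (0:ℝ) < hh := by positivity
    set ε : ℝ := (((2:ℝ)^(n+1))^2)⁻¹ with hεdef
    have hε : (0:ℝ) < ε := by positivity
    set g : ℝ → ℂ := fun u => f u - f (u + hh) with hgdef
    have hg : Integrable g volume := hf.sub (hf.comp_add_right hh)
    have hgc : Continuous (𝓕 g) := contFT g hg
    have hpt : ∀ t ∈ Sn n, (‖𝓕 f t‖₊ : ℝ≥0∞)^2
        ≤ ENNReal.ofReal ((Real.exp 1 / 2) * (Real.exp (-(ε*t^2)) * ‖𝓕 g t‖^2)) := by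
      intro t ht
      obtain ⟨ht1, ht2⟩ := ht
      have ht1 : (2:ℝ)^n ≤ |t| := ht1
      have ht2 : |t| < (2:ℝ)^(n+1) := ht2
      have hgf : ‖𝓕 g t‖^2 = (2 - 2 * Real.cos (2*π*(hh*t))) * ‖𝓕 f t‖^2 := by
        rw [show 𝓕 g t = (1 - (Real.fourierChar (hh*t) : ℂ)) * 𝓕 f t from ftSub f hf hh t,
          norm_mul, mul_pow, norm_one_sub_char]
      have h14 : (1:ℝ)/4 ≤ hh * |t| := by
        have e1 : ((2:ℝ)^(n+2)) = 2^n * 4 := by ring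
        have : (1:ℝ)/4 = ((2:ℝ)^n * 4)⁻¹ * 2^n := by
          field_simp
        rw [this, hhh, e1]
        exact mul_le_mul_of_nonneg_left ht1 (by positivity)
      have h12 : hh * |t| ≤ 1/2 := by
        have e1 : ((2:ℝ)^(n+2)) = 2^(n+1) * 2 := by ring
        have e2 : ((2:ℝ)^(n+1) * 2)⁻¹ * (2:ℝ)^(n+1) = 1/2 := by
          field_simp
        calc hh * |t| ≤ hh * (2:ℝ)^(n+1) := mul_le_mul_of_nonneg_left ht2.le hh0.le
          _ = 1/2 := by rw [hhh, e1]; exact e2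
      have hcos : Real.cos (2*π*(hh*t)) ≤ 0 := by
        rw [← Real.cos_abs]
        have habs : |2*π*(hh*t)| = 2*π*(hh*|t|) := by
          rw [abs_mul (2*π) (hh*t), abs_mul hh t, _root_.abs_of_nonneg hh0.le,
            _root_.abs_of_nonneg (by positivity : (0:ℝ) ≤ 2*π)]
        rw [habs]
        apply Real.cos_nonpos_of_pi_div_two_le_of_le
        · nlinarith [Real.pi_pos]
        · nlinarith [Real.pi_pos]
      have hexp : Real.exp (-1) ≤ Real.exp (-(ε*t^2)) := by
        apply Real.exp_le_exp.2
        have htsq : t^2 ≤ ((2:ℝ)^(n+1))^2 := by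
          rw [← _root_.sq_abs t]
          exact pow_le_pow_left₀ (abs_nonneg t) ht2.le 2
        have hb : (0:ℝ) < ((2:ℝ)^(n+1))^2 := by positivity
        have : ε * t^2 ≤ 1 := by
          calc ε * t^2 ≤ ε * ((2:ℝ)^(n+1))^2 := mul_le_mul_of_nonneg_left htsq hε.le
            _ = 1 := by rw [hεdef]; exact inv_mul_cancel₀ hb.ne'
        linarith
      have hreal : ‖𝓕 f t‖^2 ≤ (Real.exp 1 / 2) * (Real.exp (-(ε*t^2)) * ‖𝓕 g t‖^2) := by
        have ha : (0:ℝ) ≤ ‖𝓕 f t‖^2 := by positivity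
        have hB : (2:ℝ) ≤ 2 - 2 * Real.cos (2*π*(hh*t)) := by linarith
        have h1 : 2 * ‖𝓕 f t‖^2 ≤ (2 - 2 * Real.cos (2*π*(hh*t))) * ‖𝓕 f t‖^2 :=
          mul_le_mul_of_nonneg_right hB ha
        have h2 : (0:ℝ) ≤ (2 - 2 * Real.cos (2*π*(hh*t))) * ‖𝓕 f t‖^2 :=
          le_trans (by positivity) h1
        have hgf2 : Real.exp (-1) * (2 * ‖𝓕 f t‖^2)
            ≤ Real.exp (-(ε*t^2)) * ‖𝓕 g t‖^2 := by
          rw [hgf]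
          calc Real.exp (-1) * (2 * ‖𝓕 f t‖^2)
              ≤ Real.exp (-1) * ((2 - 2 * Real.cos (2*π*(hh*t))) * ‖𝓕 f t‖^2) :=
                mul_le_mul_of_nonneg_left h1 (Real.exp_pos _).le
            _ ≤ Real.exp (-(ε*t^2)) * ((2 - 2 * Real.cos (2*π*(hh*t))) * ‖𝓕 f t‖^2) :=
                mul_le_mul_of_nonneg_right hexp h2
        calc ‖𝓕 f t‖^2 = (Real.exp 1 / 2) * (Real.exp (-1) * (2 * ‖𝓕 f t‖^2)) := by
              rw [Real.exp_neg]
              field_simp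
          _ ≤ (Real.exp 1 / 2) * (Real.exp (-(ε*t^2)) * ‖𝓕 g t‖^2) :=
              mul_le_mul_of_nonneg_left hgf2 (by positivity)
      calc (‖𝓕 f t‖₊ : ℝ≥0∞)^2 = ENNReal.ofReal (‖𝓕 f t‖^2) := by
            rw [ENNReal.ofReal_pow (norm_nonneg _), ofReal_norm, enorm_eq_nnnorm]
        _ ≤ _ := ENNReal.ofReal_le_ofReal hreal
    calc ∫⁻ t in Sn n, (‖𝓕 f t‖₊ : ℝ≥0∞)^2
        ≤ ∫⁻ t in Sn n, ENNReal.ofReal ((Real.exp 1 / 2) * (Real.exp (-(ε*t^2)) * ‖𝓕 g t‖^2)) := by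
          apply setLIntegral_mono ?_ hpt
          exact ENNReal.measurable_ofReal.comp (Continuous.measurable (by fun_prop))
      _ = ENNReal.ofReal (Real.exp 1 / 2)
          * ∫⁻ t in Sn n, ENNReal.ofReal (Real.exp (-(ε*t^2)) * ‖𝓕 g t‖^2) := by
          simp_rw [ENNReal.ofReal_mul (by positivity : (0:ℝ) ≤ Real.exp 1 / 2)]
          rw [lintegral_const_mul' _ _ ENNReal.ofReal_ne_top]
      _ ≤ ENNReal.ofReal (Real.exp 1 / 2)
          * ∫⁻ t, ENNReal.ofReal (Real.exp (-(ε*t^2)) * ‖𝓕 g t‖^2) :=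
          mul_le_mul_right (setLIntegral_le_lintegral _ _) _
      _ ≤ ENNReal.ofReal (Real.exp 1 / 2) * ∫⁻ u, (‖g u‖₊ : ℝ≥0∞)^2 :=
          mul_le_mul_right (gauss_planch g hg hε) _
      _ ≤ ENNReal.ofReal (Real.exp 1 / 2) * ENNReal.ofReal (C' * |hh| ^ (1+α)) :=
          mul_le_mul_right (hb2 hh) _
      _ = ENNReal.ofReal ((Real.exp 1 / 2) * (C' * (((2:ℝ)^(n+2))⁻¹) ^ (1+α))) := by
          rw [← ENNReal.ofReal_mul (by positivity), _root_.abs_of_pos hh0]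
  -- Cauchy-Schwarz on each annulus
  have annL1 : ∀ n : ℕ, ∫⁻ t in Sn n, (‖𝓕 f t‖₊ : ℝ≥0∞)
      ≤ (∫⁻ t in Sn n, (‖𝓕 f t‖₊ : ℝ≥0∞)^2) ^ ((1:ℝ)/2) * (volume (Sn n)) ^ ((1:ℝ)/2) := by
    intro n
    have hconj : Real.HolderConjugate 2 2 := Real.HolderConjugate.two_two
    have := ENNReal.lintegral_mul_le_Lp_mul_Lq (volume.restrict (Sn n)) hconj
      (f := fun t => (‖𝓕 f t‖₊ : ℝ≥0∞)) (g := fun _ => 1)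
      hFmeas.aemeasurable aemeasurable_const
    simp only [Pi.mul_apply, mul_one, ENNReal.one_rpow] at this
    calc ∫⁻ t in Sn n, (‖𝓕 f t‖₊ : ℝ≥0∞) ≤ _ := this
      _ = (∫⁻ t in Sn n, (‖𝓕 f t‖₊ : ℝ≥0∞)^2) ^ ((1:ℝ)/2) * (volume (Sn n)) ^ ((1:ℝ)/2) := by
          congr 1
          · congr 1
            apply lintegral_congr
            intro t
            rw [show ((2:ℝ) = ((2:ℕ):ℝ)) from by norm_num, ENNReal.rpow_natCast]
          · rw [lintegral_one, Measure.restrict_apply_univ]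
  -- geometric data
  have h2α : (0:ℝ) ≤ (2:ℝ)^(-α) := Real.rpow_nonneg (by norm_num) _
  set ρ : ℝ := ((2:ℝ) ^ (-α)) ^ ((1:ℝ)/2) with hρ
  have hρ0 : (0:ℝ) ≤ ρ := Real.rpow_nonneg h2α _
  have hρ1 : ρ < 1 := by
    have h1 : (2:ℝ)^(-α) < 1 :=
      Real.rpow_lt_one_of_one_lt_of_neg one_lt_two (neg_lt_zero.2 hα)
    exact Real.rpow_lt_one h2α h1 (by norm_num)
  set D : ℝ := ((Real.exp 1 / 2) * C') ^ ((1:ℝ)/2) with hD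
  have hD0 : (0:ℝ) ≤ D := Real.rpow_nonneg (by positivity) _
  have annBound : ∀ n : ℕ, ∫⁻ t in Sn n, (‖𝓕 f t‖₊ : ℝ≥0∞) ≤ ENNReal.ofReal (D * ρ^n) := by
    intro n
    set a : ℝ := (Real.exp 1 / 2) * (C' * (((2:ℝ)^(n+2))⁻¹) ^ (1+α)) with ha'
    set b : ℝ := (2:ℝ)^(n+2) with hb'
    have ha0 : (0:ℝ) ≤ a := by
      have : (0:ℝ) ≤ (((2:ℝ)^(n+2))⁻¹) ^ (1+α) := Real.rpow_nonneg (by positivity) _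
      positivity
    have hb0 : (0:ℝ) ≤ b := by positivity
    refine le_trans (annL1 n) ?_
    have h1 : (∫⁻ t in Sn n, (‖𝓕 f t‖₊:ℝ≥0∞)^2)^((1:ℝ)/2) ≤ (ENNReal.ofReal a)^((1:ℝ)/2) :=
      ENNReal.rpow_le_rpow (annL2 n) (by norm_num)
    have h2 : (volume (Sn n))^((1:ℝ)/2) ≤ (ENNReal.ofReal b)^((1:ℝ)/2) :=
      ENNReal.rpow_le_rpow (hSvol n) (by norm_num)
    refine le_trans (mul_le_mul' h1 h2) ?_
    rw [ENNReal.ofReal_rpow_of_nonneg ha0 (by norm_num),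
      ENNReal.ofReal_rpow_of_nonneg hb0 (by norm_num),
      ← ENNReal.ofReal_mul (Real.rpow_nonneg ha0 _)]
    apply ENNReal.ofReal_le_ofReal
    rw [← Real.mul_rpow ha0 hb0]
    have hx : (0:ℝ) < (2:ℝ)^(n+2) := by positivity
    have hab : a * b = ((Real.exp 1 / 2) * C') * ((2:ℝ)^(-α)) ^ (n+2) := by
      have e1 : (((2:ℝ)^(n+2))⁻¹) ^ (1+α) = ((2:ℝ)^(n+2)) ^ (-(1+α)) := by
        rw [Real.inv_rpow hx.le, ← Real.rpow_neg hx.le]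
      rw [ha', hb', e1, ← Real.rpow_natCast (2:ℝ) (n+2), ← Real.rpow_natCast ((2:ℝ)^(-α)) (n+2),
        ← Real.rpow_mul (by norm_num : (0:ℝ) ≤ 2), ← Real.rpow_mul (by norm_num : (0:ℝ) ≤ 2)]
      rw [show rexp 1 / 2 * (C' * (2:ℝ) ^ ((((n+2):ℕ):ℝ) * -(1+α))) * (2:ℝ) ^ ((((n+2):ℕ)):ℝ)
          = rexp 1 / 2 * C' * ((2:ℝ) ^ ((((n+2):ℕ):ℝ) * -(1+α)) * (2:ℝ) ^ ((((n+2):ℕ)):ℝ)) from by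
            ring,
        ← Real.rpow_add (by norm_num : (0:ℝ) < 2)]
      congr 1
      ring
    have hcollapse : (a * b) ^ ((1:ℝ)/2) = D * ρ^(n+2) := by
      rw [hab, Real.mul_rpow (by positivity) (pow_nonneg h2α _), hD, hρ]
      congr 1
      rw [← Real.rpow_natCast ((2:ℝ)^(-α)) (n+2),
        ← Real.rpow_natCast (((2:ℝ)^(-α)) ^ ((1:ℝ)/2)) (n+2),
        ← Real.rpow_mul h2α, ← Real.rpow_mul h2α, mul_comm]
    rw [hcollapse]
    exact mul_le_mul_of_nonneg_left
      (pow_le_pow_of_le_one hρ0 hρ1.le (by omega)) hD0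
  -- sum the tail
  have tail : ∫⁻ t in {t : ℝ | 1 ≤ |t|}, (‖𝓕 f t‖₊ : ℝ≥0∞)
      ≤ ENNReal.ofReal D * (1 - ENNReal.ofReal ρ)⁻¹ := by
    refine le_trans (lintegral_mono_set hScover) ?_
    refine le_trans (lintegral_iUnion_le _ _) ?_
    calc ∑' n : ℕ, ∫⁻ t in Sn n, (‖𝓕 f t‖₊ : ℝ≥0∞)
        ≤ ∑' n : ℕ, ENNReal.ofReal (D * ρ^n) := ENNReal.tsum_le_tsum annBound
      _ = ∑' n : ℕ, ENNReal.ofReal D * (ENNReal.ofReal ρ)^n := by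
          congr 1
          funext n
          rw [ENNReal.ofReal_mul hD0, ENNReal.ofReal_pow hρ0]
      _ = ENNReal.ofReal D * ∑' n : ℕ, (ENNReal.ofReal ρ)^n := ENNReal.tsum_mul_left
      _ = ENNReal.ofReal D * (1 - ENNReal.ofReal ρ)⁻¹ := by rw [ENNReal.tsum_geometric]
  have htail_ne : (1 - ENNReal.ofReal ρ)⁻¹ ≠ ⊤ := by
    rw [Ne, ENNReal.inv_eq_top, tsub_eq_zero_iff_le]
    exact not_le.2 (ENNReal.ofReal_lt_one.2 hρ1)
  -- the unit ball part
  set s₀ : Set ℝ := (fun t : ℝ => |t|) ⁻¹' (Set.Iio 1) with hs₀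
  have hs₀meas : MeasurableSet s₀ := measurableSet_Iio.preimage continuous_abs.measurable
  have hs₀c : s₀ᶜ = {t : ℝ | 1 ≤ |t|} := by
    ext t
    simp [hs₀, not_lt]
  have hM : ∀ t, (‖𝓕 f t‖₊ : ℝ≥0∞) ≤ ENNReal.ofReal (∫ s, ‖f s‖) := by
    intro t
    rw [← enorm_eq_nnnorm, ← ofReal_norm]
    exact ENNReal.ofReal_le_ofReal (normFT_le f t)
  have hball : ∫⁻ t in s₀, (‖𝓕 f t‖₊ : ℝ≥0∞) ≤ ENNReal.ofReal (∫ s, ‖f s‖) * volume s₀ := by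
    refine le_trans (setLIntegral_mono measurable_const (fun t _ => hM t)) ?_
    rw [setLIntegral_const]
  have hvol₀ : volume s₀ ≤ ENNReal.ofReal 2 := by
    have : s₀ ⊆ Set.Ioo (-1 : ℝ) 1 := by
      intro t ht
      exact abs_lt.1 ht
    refine le_trans (measure_mono this) ?_
    rw [Real.volume_Ioo]
    norm_num
  refine ⟨hFc.aestronglyMeasurable, ?_⟩
  show (∫⁻ t, (‖𝓕 f t‖₊ : ℝ≥0∞) ∂volume) < ⊤
  rw [← lintegral_add_compl (fun t => (‖𝓕 f t‖₊ : ℝ≥0∞)) hs₀meas]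
  apply ENNReal.add_lt_top.2
  constructor
  · refine lt_of_le_of_lt hball ?_
    exact ENNReal.mul_lt_top ENNReal.ofReal_lt_top (lt_of_le_of_lt hvol₀ ENNReal.ofReal_lt_top)
  · rw [hs₀c]
    refine lt_of_le_of_lt tail ?_
    exact ENNReal.mul_lt_top ENNReal.ofReal_lt_top (lt_top_iff_ne_top.2 htail_ne)

open Filter

/-- The Fourier transform of `f ∈ L¹(ℝ)`, with the normalization
`f̂(t) = (1/(2π)) ∫ f(s) e^{-i t s} ds` used in the paper. -/
noncomputable def fourierHat (f : ℝ → ℂ) (t : ℝ) : ℂ :=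
  (1 / (2 * Real.pi)) * ∫ s : ℝ, f s * Complex.exp (-(Complex.I * t * s))

/-- If `f ∈ L¹(ℝ)` satisfies `‖f - T_h f‖₂² = O(|h|^{1+α})` for some `α > 0`,
where `(T_h f)(u) = f(u + h)`, then `f̂ ∈ L¹(ℝ)`. -/
theorem stmt0 (f : ℝ → ℂ) (hf : Integrable f (volume : Measure ℝ))
    (α : ℝ) (hα : 0 < α) (C : ℝ)
    (hbound : ∀ h : ℝ,
      eLpNorm (fun u : ℝ => f u - f (u + h)) 2 volume ^ 2
        ≤ ENNReal.ofReal (C * |h| ^ (1 + α))) :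
    Integrable (fourierHat f) (volume : Measure ℝ) := by
  have hC'0 : (0:ℝ) ≤ max C 0 := le_max_right _ _
  have hb2 : ∀ h : ℝ, ∫⁻ u : ℝ, (‖f u - f (u + h)‖₊ : ℝ≥0∞)^2
      ≤ ENNReal.ofReal (max C 0 * |h| ^ (1 + α)) := by
    intro h
    have h1 := hbound h
    rw [eLpNorm_eq_lintegral_rpow_enorm_toReal (by norm_num) (by norm_num)] at h1
    simp only [ENNReal.toReal_ofNat] at h1
    rw [← ENNReal.rpow_natCast _ 2, ← ENNReal.rpow_mul] at h1
    norm_num at h1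
    refine le_trans h1 (ENNReal.ofReal_le_ofReal ?_)
    exact mul_le_mul_of_nonneg_right (le_max_left C 0) (by positivity)
  have h𝓕 : Integrable (𝓕 f) volume := FT_integrable f hf α hα (max C 0) hC'0 hb2
  have h2π : (2 * π) ≠ 0 := (by positivity : (0:ℝ) < 2*π).ne'
  have heq : fourierHat f = fun t => ((1 / (2*π) : ℝ) : ℂ) * 𝓕 f (t / (2*π)) := by
    funext t
    rw [fourierHat, Real.fourier_real_eq_integral_exp_smul]
    congr 1
    · push_cast
      norm_num
    · congr 1
      funext s
      rw [smul_eq_mul, mul_comm]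
      congr 1
      have e1 : (-2*π*s*(t/(2*π)) : ℝ) = -(t*s) := by
        field_simp
      rw [show ((-2*π*s*(t/(2*π)) : ℝ) : ℂ) = ((-(t*s) : ℝ) : ℂ) from by rw [e1]]
      push_cast
      ring
  rw [heq]
  exact (h𝓕.comp_div h2π).const_mul _
end

section
/- If f ∈ L¹(ℝ) is absolutely continuous with f' ∈ L¹(ℝ) ∩ Lᵖ(ℝ) for some p > 1, then for all h > 0, ‖T_h f - f‖₂² ≤ h^{2 - 1/p} ‖f'‖₁ ‖f'‖_p, where (T_h f)(u) = f(u+h). -/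
open MeasureTheory Filter intervalIntegral

open scoped ENNReal NNReal

/-- If `f ∈ L¹(ℝ)` is absolutely continuous (i.e. `f(b) - f(a) = ∫_a^b f'`) with
`f' ∈ L¹(ℝ) ∩ Lᵖ(ℝ)` for some `p > 1`, then for all `h > 0`,
`‖T_h f - f‖₂² ≤ h^{2 - 1/p} ‖f'‖₁ ‖f'‖_p`, where `(T_h f)(u) = f(u + h)`. -/
theorem stmt2 (f f' : ℝ → ℂ) (hf : Integrable f (volume : Measure ℝ))
    (hac : ∀ a b : ℝ, f b - f a = ∫ s in a..b, f' s)
    (hf'1 : Integrable f' (volume : Measure ℝ))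
    (p : ℝ) (hp : 1 < p)
    (hf'p : MemLp f' (ENNReal.ofReal p) (volume : Measure ℝ)) :
    ∀ h : ℝ, 0 < h →
      eLpNorm (fun u : ℝ => f (u + h) - f u) 2 volume ^ 2
        ≤ ENNReal.ofReal (h ^ (2 - 1 / p)) * eLpNorm f' 1 volume *
            eLpNorm f' (ENNReal.ofReal p) volume := by
  intro h hh
  set q : ℝ := Real.conjExponent p with hqdef
  have hpq : p.HolderConjugate q := Real.HolderConjugate.conjExponent hp
  -- measurable representative of the extended norm of `f'`
  have hae : AEMeasurable (fun s : ℝ => (‖f' s‖₊ : ℝ≥0∞)) volume := hf'1.1.aemeasurable.enorm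
  set e : ℝ → ℝ≥0∞ := hae.mk _ with he_def
  have he_meas : Measurable e := hae.measurable_mk
  have he_eq : (fun s : ℝ => (‖f' s‖₊ : ℝ≥0∞)) =ᵐ[volume] e := hae.ae_eq_mk
  set Ip : ℝ≥0∞ := (∫⁻ s, e s ^ p) ^ (1 / p) with hIpdef
  -- identification of the two norms of `f'` in terms of `e`
  have hI1 : (∫⁻ s, e s) = eLpNorm f' 1 volume := by
    rw [eLpNorm_one_eq_lintegral_enorm]
    exact (lintegral_congr_ae he_eq).symm
  have hIp : Ip = eLpNorm f' (ENNReal.ofReal p) volume := by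
    rw [eLpNorm_eq_lintegral_rpow_enorm_toReal
      (ENNReal.ofReal_pos.mpr (by linarith)).ne' ENNReal.ofReal_ne_top,
      ENNReal.toReal_ofReal (by linarith : (0:ℝ) ≤ p)]
    rw [hIpdef]
    congr 1
    refine lintegral_congr_ae (he_eq.mono fun s hs => ?_)
    exact congrArg (fun x => x ^ p) hs.symm
  have hIpne : Ip ≠ ∞ := by rw [hIp]; exact hf'p.eLpNorm_ne_top
  -- pointwise bound by the local integral of `e`
  have hG : ∀ u : ℝ, (‖f (u + h) - f u‖₊ : ℝ≥0∞) ≤ ∫⁻ s in Set.Ioc u (u + h), e s := by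
    intro u
    have h1 : f (u + h) - f u = ∫ s in Set.Ioc u (u + h), f' s := by
      rw [hac u (u + h), intervalIntegral.integral_of_le (by linarith)]
    rw [h1]
    calc (‖∫ s in Set.Ioc u (u + h), f' s‖₊ : ℝ≥0∞)
        ≤ ∫⁻ s in Set.Ioc u (u + h), (‖f' s‖₊ : ℝ≥0∞) :=
          enorm_integral_le_lintegral_enorm _
      _ = ∫⁻ s in Set.Ioc u (u + h), e s :=
          lintegral_congr_ae (ae_restrict_of_ae he_eq)
  -- uniform bound on the local integral (Hölder)
  have hB : ∀ u : ℝ, (∫⁻ s in Set.Ioc u (u + h), e s) ≤ Ip * ENNReal.ofReal h ^ (1 / q) := by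
    intro u
    have hone : (∫⁻ (_ : ℝ) in Set.Ioc u (u + h), (1:ℝ≥0∞)) = ENNReal.ofReal h := by
      rw [setLIntegral_one, Real.volume_Ioc]
      congr 1
      ring
    set g : ℝ → ℝ≥0∞ := fun _ => (1:ℝ≥0∞) with hgdef
    have hmul : ∀ s : ℝ, e s = (e * g) s := fun s => by
      simp [hgdef, Pi.mul_apply]
    calc (∫⁻ s in Set.Ioc u (u + h), e s)
        = ∫⁻ s in Set.Ioc u (u + h), (e * g) s :=
          lintegral_congr hmul
      _ ≤ (∫⁻ s in Set.Ioc u (u + h), e s ^ p) ^ (1 / p) *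
            (∫⁻ s in Set.Ioc u (u + h), (1:ℝ≥0∞) ^ q) ^ (1 / q) :=
          ENNReal.lintegral_mul_le_Lp_mul_Lq _ hpq he_meas.aemeasurable aemeasurable_const
      _ ≤ Ip * ENNReal.ofReal h ^ (1 / q) := by
          have h2 : (∫⁻ s in Set.Ioc u (u + h), (1:ℝ≥0∞) ^ q) = ENNReal.ofReal h := by
            simp only [ENNReal.one_rpow]; exact hone
          rw [h2]
          exact mul_le_mul_left
            (ENNReal.rpow_le_rpow (setLIntegral_le_lintegral _ _)
              (one_div_nonneg.mpr (by linarith))) _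
  -- Fubini: the total mass of the local integrals
  have hFub : (∫⁻ u : ℝ, ∫⁻ s in Set.Ioc u (u + h), e s) = ENNReal.ofReal h * ∫⁻ s, e s := by
    have hS : MeasurableSet {z : ℝ × ℝ | z.1 < z.2 ∧ z.2 ≤ z.1 + h} :=
      (measurableSet_lt measurable_fst measurable_snd).inter
        (measurableSet_le measurable_snd (measurable_fst.add_const h))
    have hFmeas : Measurable fun z : ℝ × ℝ =>
        Set.indicator {z : ℝ × ℝ | z.1 < z.2 ∧ z.2 ≤ z.1 + h} (fun z => e z.2) z :=
      (he_meas.comp measurable_snd).indicator hS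
    calc (∫⁻ u : ℝ, ∫⁻ s in Set.Ioc u (u + h), e s)
        = ∫⁻ u : ℝ, ∫⁻ s : ℝ, Set.indicator {z : ℝ × ℝ | z.1 < z.2 ∧ z.2 ≤ z.1 + h}
            (fun z => e z.2) (u, s) := by
          refine lintegral_congr fun u => ?_
          rw [← lintegral_indicator measurableSet_Ioc]
          refine lintegral_congr fun s => ?_
          by_cases hs : u < s ∧ s ≤ u + h <;>
            simp [Set.indicator_apply, Set.mem_Ioc, hs]
      _ = ∫⁻ s : ℝ, ∫⁻ u : ℝ, Set.indicator {z : ℝ × ℝ | z.1 < z.2 ∧ z.2 ≤ z.1 + h}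
            (fun z => e z.2) (u, s) := by
          exact lintegral_lintegral_swap hFmeas.aemeasurable
      _ = ∫⁻ s : ℝ, e s * ENNReal.ofReal h := by
          refine lintegral_congr fun s => ?_
          have : (fun u : ℝ => Set.indicator {z : ℝ × ℝ | z.1 < z.2 ∧ z.2 ≤ z.1 + h}
              (fun z => e z.2) (u, s)) =
              fun u : ℝ => Set.indicator (Set.Ico (s - h) s) (fun _ => e s) u := by
            funext u
            by_cases hu : u < s ∧ s ≤ u + h
            · rw [Set.indicator_of_mem
                  (show (u, s) ∈ {z : ℝ × ℝ | z.1 < z.2 ∧ z.2 ≤ z.1 + h} from hu),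
                Set.indicator_of_mem (show u ∈ Set.Ico (s - h) s from
                  ⟨by linarith [hu.2], hu.1⟩)]
            · rw [Set.indicator_of_notMem
                  (show (u, s) ∉ {z : ℝ × ℝ | z.1 < z.2 ∧ z.2 ≤ z.1 + h} from hu),
                Set.indicator_of_notMem (fun hc => hu ⟨hc.2, by linarith [hc.1]⟩)]
          rw [this, lintegral_indicator_const measurableSet_Ico, Real.volume_Ico]
          congr 1
          ring
      _ = ENNReal.ofReal h * ∫⁻ s, e s := by
          rw [lintegral_mul_const' _ _ ENNReal.ofReal_ne_top, mul_comm]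
  -- rewrite the left-hand side
  have hL : eLpNorm (fun u : ℝ => f (u + h) - f u) 2 volume ^ 2
      = ∫⁻ u : ℝ, (‖f (u + h) - f u‖₊ : ℝ≥0∞) ^ (2:ℝ) := by
    rw [eLpNorm_eq_lintegral_rpow_enorm_toReal two_ne_zero ENNReal.ofNat_ne_top]
    rw [← ENNReal.rpow_natCast _ 2, ← ENNReal.rpow_mul]
    norm_num
    rfl
  -- exponent arithmetic
  have h1q : (1 / q : ℝ) = 1 - 1 / p := by
    rw [one_div, one_div, ← hpq.one_sub_inv]
  have hexp : (1 / q : ℝ) + 1 = 2 - 1 / p := by rw [h1q]; ring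
  have hO0 : ENNReal.ofReal h ≠ 0 := (ENNReal.ofReal_pos.mpr hh).ne'
  have hpow : ENNReal.ofReal h ^ (1 / q) * ENNReal.ofReal h
      = ENNReal.ofReal (h ^ (2 - 1 / p)) := by
    calc ENNReal.ofReal h ^ (1 / q) * ENNReal.ofReal h
        = ENNReal.ofReal h ^ (1 / q) * ENNReal.ofReal h ^ (1:ℝ) := by
          rw [ENNReal.rpow_one]
      _ = ENNReal.ofReal h ^ ((1 / q : ℝ) + 1) :=
          (ENNReal.rpow_add _ _ hO0 ENNReal.ofReal_ne_top).symm
      _ = ENNReal.ofReal (h ^ (2 - 1 / p)) := by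
          rw [hexp, ← ENNReal.ofReal_rpow_of_pos hh]
  have hBne : Ip * ENNReal.ofReal h ^ (1 / q) ≠ ∞ :=
    ENNReal.mul_ne_top hIpne
      (ENNReal.rpow_ne_top_of_nonneg hpq.symm.one_div_nonneg ENNReal.ofReal_ne_top)
  rw [hL]
  calc (∫⁻ u : ℝ, (‖f (u + h) - f u‖₊ : ℝ≥0∞) ^ (2:ℝ))
      ≤ ∫⁻ u : ℝ, (Ip * ENNReal.ofReal h ^ (1 / q)) * ∫⁻ s in Set.Ioc u (u + h), e s := by
        refine lintegral_mono fun u => ?_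
        rw [show (2:ℝ) = ((2:ℕ):ℝ) by norm_num, ENNReal.rpow_natCast, sq]
        exact mul_le_mul' ((hG u).trans (hB u)) (hG u)
    _ = (Ip * ENNReal.ofReal h ^ (1 / q)) * (ENNReal.ofReal h * ∫⁻ s, e s) := by
        rw [lintegral_const_mul' _ _ hBne, hFub]
    _ = ENNReal.ofReal (h ^ (2 - 1 / p)) * eLpNorm f' 1 volume *
          eLpNorm f' (ENNReal.ofReal p) volume := by
        rw [← hI1, ← hIp, ← hpow]
        ring
end

section
/- Let B be a densely-defined self-adjoint operator on a Hilbert space H and let C be a bounded operator on H such that the commutator [B, C] has a bounded extension to H. Then the commutator [B, e^{iC}] also has a bounded extension, and [B, e^{iC}] = i ∫₀¹ e^{i(1-t)C} [B,C] e^{itC} dt. -/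
open MeasureTheory intervalIntegral NormedSpace
open scoped InnerProductSpace

set_option linter.unusedSectionVars false

/-! ### Auxiliary lemmas -/

theorem duhamel_sa_closed {H : Type*} [NormedAddCommGroup H] [InnerProductSpace ℂ H]
    [CompleteSpace H] (B : H →ₗ.[ℂ] H) (hB : IsSelfAdjoint B)
    {u v : H} (f : ℕ → B.domain)
    (hu : Filter.Tendsto (fun n => (f n : H)) Filter.atTop (nhds u))
    (hv : Filter.Tendsto (fun n => B (f n)) Filter.atTop (nhds v)) :
    ∃ hu' : u ∈ B.domain, B ⟨u, hu'⟩ = v := by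
  have hB' : B.adjoint = B := hB
  have hd : Dense (B.domain : Set H) := hB.dense_domain
  obtain ⟨hdeq, happ⟩ := LinearPMap.ext_iff.mp hB'
  have hsymm : ∀ x y : B.domain, ⟪(B x : H), (y:H)⟫_ℂ = ⟪(x : H), B y⟫_ℂ := by
    intro x y
    have hx' : (x : H) ∈ B.adjoint.domain := by rw [hdeq]; exact x.2
    have := LinearPMap.adjoint_isFormalAdjoint hd (⟨x, hx'⟩ : B.adjoint.domain) y
    rwa [happ (x := (x:H)) (hf := hx') (hg := x.2)] at this
  have hw : ∀ x : B.domain, ⟪v, (x:H)⟫_ℂ = ⟪u, B x⟫_ℂ := by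
    intro x
    have h1 : Filter.Tendsto (fun n => ⟪(B (f n) : H), (x:H)⟫_ℂ) Filter.atTop
        (nhds ⟪v, (x:H)⟫_ℂ) := hv.inner tendsto_const_nhds
    have h2 : Filter.Tendsto (fun n => ⟪((f n : H)), B x⟫_ℂ) Filter.atTop
        (nhds ⟪u, B x⟫_ℂ) := hu.inner tendsto_const_nhds
    have : (fun n => ⟪(B (f n) : H), (x:H)⟫_ℂ) = fun n => ⟪((f n : H)), B x⟫_ℂ := by
      funext n; exact hsymm (f n) x
    rw [this] at h1
    exact tendsto_nhds_unique h1 h2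
  have hmem' : u ∈ B.adjoint.domain :=
    LinearPMap.mem_adjoint_domain_of_exists u ⟨v, fun x => hw x⟩
  have hmem : u ∈ B.domain := by rw [← hdeq]; exact hmem'
  refine ⟨hmem, ?_⟩
  have := LinearPMap.adjoint_apply_eq hd (⟨u, hmem'⟩ : B.adjoint.domain) (x₀ := v)
    (fun x => hw x)
  rw [happ (x := u) (hf := hmem') (hg := hmem)] at this
  exact this

theorem duhamel_beta_nat (k l : ℕ) :
    (∫ t in (0:ℝ)..1, (1 - (t:ℂ)) ^ k * (t:ℂ) ^ l)
      = ((k.factorial : ℂ) * l.factorial) / ((k + l + 1).factorial : ℂ) := by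
  have h1 : Complex.betaIntegral (l + 1) (k + 1)
      = ∫ t in (0:ℝ)..1, (1 - (t:ℂ)) ^ k * (t:ℂ) ^ l := by
    rw [Complex.betaIntegral]
    refine intervalIntegral.integral_congr fun t ht => ?_
    simp only [add_sub_cancel_right]
    rw [Complex.cpow_natCast, Complex.cpow_natCast, mul_comm]
  have h2 := Complex.Gamma_mul_Gamma_eq_betaIntegral
    (s := (l:ℂ) + 1) (t := (k:ℂ) + 1)
    (by simp [Complex.add_re]; positivity) (by simp [Complex.add_re]; positivity)
  rw [h1] at h2
  have hgl : Complex.Gamma ((l:ℂ) + 1) = l.factorial := Complex.Gamma_nat_eq_factorial l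
  have hgk : Complex.Gamma ((k:ℂ) + 1) = k.factorial := Complex.Gamma_nat_eq_factorial k
  have hsum : (l:ℂ) + 1 + ((k:ℂ) + 1) = ((k + l + 1 : ℕ) : ℂ) + 1 := by push_cast; ring
  have hgsum : Complex.Gamma ((l:ℂ) + 1 + ((k:ℂ) + 1)) = ((k + l + 1).factorial : ℂ) := by
    rw [hsum, Complex.Gamma_nat_eq_factorial]
  rw [hgl, hgk, hgsum] at h2
  have hne : ((k + l + 1).factorial : ℂ) ≠ 0 :=
    Nat.cast_ne_zero.mpr (Nat.factorial_ne_zero _)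
  rw [eq_div_iff hne]; linear_combination -h2

theorem duhamel_sum_antidiag_factorial_inv (n : ℕ) :
    ∑ kl ∈ Finset.HasAntidiagonal.antidiagonal n, ((kl.1.factorial * kl.2.factorial : ℝ))⁻¹
      = 2 ^ n / n.factorial := by
  rw [Finset.Nat.sum_antidiagonal_eq_sum_range_succ_mk]
  have h : ∀ i ∈ Finset.range (n + 1),
      ((i.factorial * (n - i).factorial : ℝ))⁻¹ = (n.choose i : ℝ) / n.factorial := by
    intro i hi
    have hi' : i ≤ n := Nat.lt_succ_iff.mp (Finset.mem_range.mp hi)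
    have := Nat.choose_mul_factorial_mul_factorial hi'
    have h2 : (n.choose i : ℝ) * (i.factorial * (n - i).factorial) = n.factorial := by
      exact_mod_cast congrArg (Nat.cast : ℕ → ℝ) (by rw [← this]; ring)
    rw [eq_div_iff (by exact_mod_cast Nat.factorial_ne_zero n), inv_mul_eq_div,
      div_eq_iff (by positivity)]
    linarith [h2]
  rw [Finset.sum_congr rfl h, ← Finset.sum_div]
  congr 1
  exact_mod_cast Nat.sum_range_choose n

section CLMSeries

variable {H : Type*} [NormedAddCommGroup H] [NormedSpace ℂ H] [CompleteSpace H]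

theorem duhamel_clm_norm_pow_le (X : H →L[ℂ] H) (p : ℕ) : ‖X ^ p‖ ≤ ‖X‖ ^ p := by
  induction p with
  | zero => rw [pow_zero, pow_zero]; exact ContinuousLinearMap.norm_id_le
  | succ p ih =>
    rw [pow_succ, pow_succ]
    exact (norm_mul_le _ _).trans
      (mul_le_mul ih le_rfl (norm_nonneg _) (pow_nonneg (norm_nonneg _) _))

noncomputable def ff (A : H →L[ℂ] H) (t : ℝ) (p : ℕ) : H →L[ℂ] H :=
  ((p.factorial : ℂ))⁻¹ • ((1 - (t:ℂ)) • A) ^ p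

noncomputable def gg (A K : H →L[ℂ] H) (t : ℝ) (q : ℕ) : H →L[ℂ] H :=
  K * (((q.factorial : ℂ))⁻¹ • ((t:ℂ) • A) ^ q)

theorem duhamel_hasSum_FF (A K : H →L[ℂ] H) (t : ℝ) :
    HasSum (fun n => ∑ kl ∈ Finset.HasAntidiagonal.antidiagonal n, ff A t kl.1 * gg A K t kl.2)
      ((exp ((1 - (t:ℂ)) • A)).comp (K.comp (exp ((t:ℂ) • A)))) := by
  have hf : Summable fun p => ‖ff A t p‖ := norm_expSeries_summable' ((1 - (t:ℂ)) • A)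
  have hg : Summable fun q => ‖gg A K t q‖ := by
    have h1 : Summable fun q => ‖K‖ * ‖((q.factorial : ℂ))⁻¹ • ((t:ℂ) • A) ^ q‖ :=
      (norm_expSeries_summable' ((t:ℂ) • A)).mul_left _
    refine h1.of_nonneg_of_le (fun q => norm_nonneg _) fun q => norm_mul_le _ _
  have hsum : Summable fun n => ∑ kl ∈ Finset.HasAntidiagonal.antidiagonal n, ff A t kl.1 * gg A K t kl.2 :=
    (summable_norm_sum_mul_antidiagonal_of_summable_norm hf hg).of_norm
  have heq := tsum_mul_tsum_eq_tsum_sum_antidiagonal_of_summable_norm hf hg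
  have h2 : (∑' p, ff A t p) = exp ((1 - (t:ℂ)) • A) := by
    rw [exp_eq_tsum (𝕂 := ℂ)]; rfl
  have h3 : (∑' q, gg A K t q) = K * exp ((t:ℂ) • A) := by
    rw [exp_eq_tsum (𝕂 := ℂ)]
    exact (expSeries_summable' (𝕂 := ℂ) ((t:ℂ) • A)).tsum_mul_left K
  rw [h2, h3] at heq
  have hc : (exp ((1 - (t:ℂ)) • A)).comp (K.comp (exp ((t:ℂ) • A)))
      = exp ((1 - (t:ℂ)) • A) * (K * exp ((t:ℂ) • A)) := rfl
  rw [hc, heq]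
  exact hsum.hasSum

theorem duhamel_term_eq (A K : H →L[ℂ] H) (kl : ℕ × ℕ) (t : ℝ) :
    ff A t kl.1 * gg A K t kl.2
      = (((kl.1.factorial : ℂ))⁻¹ * ((kl.2.factorial : ℂ))⁻¹ *
          ((1 - (t:ℂ)) ^ kl.1 * (t:ℂ) ^ kl.2)) • (A ^ kl.1 * (K * A ^ kl.2)) := by
  rw [ff, gg]
  simp only [smul_pow, smul_smul, smul_mul_assoc, mul_smul_comm]
  congr 1
  ring

theorem duhamel_integral_FF (A K : H →L[ℂ] H) (n : ℕ) :
    (∫ t in (0:ℝ)..1, ∑ kl ∈ Finset.HasAntidiagonal.antidiagonal n, ff A t kl.1 * gg A K t kl.2)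
      = ((n+1).factorial : ℂ)⁻¹ •
          ∑ kl ∈ Finset.HasAntidiagonal.antidiagonal n, A ^ kl.1 * (K * A ^ kl.2) := by
  have hcont : ∀ kl : ℕ × ℕ, Continuous fun t : ℝ =>
      (((kl.1.factorial : ℂ))⁻¹ * ((kl.2.factorial : ℂ))⁻¹ *
        ((1 - (t:ℂ)) ^ kl.1 * (t:ℂ) ^ kl.2)) • (A ^ kl.1 * (K * A ^ kl.2)) := by
    intro kl
    fun_prop
  calc (∫ t in (0:ℝ)..1, ∑ kl ∈ Finset.HasAntidiagonal.antidiagonal n, ff A t kl.1 * gg A K t kl.2)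
      = ∑ kl ∈ Finset.HasAntidiagonal.antidiagonal n, ∫ t in (0:ℝ)..1,
          (((kl.1.factorial : ℂ))⁻¹ * ((kl.2.factorial : ℂ))⁻¹ *
            ((1 - (t:ℂ)) ^ kl.1 * (t:ℂ) ^ kl.2)) • (A ^ kl.1 * (K * A ^ kl.2)) := by
        rw [show (fun t : ℝ => ∑ kl ∈ Finset.HasAntidiagonal.antidiagonal n, ff A t kl.1 * gg A K t kl.2)
            = fun t : ℝ => ∑ kl ∈ Finset.HasAntidiagonal.antidiagonal n,
              (((kl.1.factorial : ℂ))⁻¹ * ((kl.2.factorial : ℂ))⁻¹ *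
                ((1 - (t:ℂ)) ^ kl.1 * (t:ℂ) ^ kl.2)) • (A ^ kl.1 * (K * A ^ kl.2))
          from funext fun t => Finset.sum_congr rfl fun kl _ => duhamel_term_eq A K kl t]
        exact intervalIntegral.integral_finset_sum
          (fun kl _ => ((hcont kl).intervalIntegrable _ _))
    _ = ∑ kl ∈ Finset.HasAntidiagonal.antidiagonal n, ((n+1).factorial : ℂ)⁻¹ • (A ^ kl.1 * (K * A ^ kl.2)) := by
        refine Finset.sum_congr rfl fun kl hkl => ?_
        have hkl' : kl.1 + kl.2 = n := Finset.HasAntidiagonal.mem_antidiagonal.mp hkl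
        rw [intervalIntegral.integral_smul_const, intervalIntegral.integral_const_mul,
          duhamel_beta_nat]
        congr 1
        have h1 : (kl.1.factorial : ℂ) ≠ 0 := Nat.cast_ne_zero.mpr (Nat.factorial_ne_zero _)
        have h2 : (kl.2.factorial : ℂ) ≠ 0 := Nat.cast_ne_zero.mpr (Nat.factorial_ne_zero _)
        have h3 : ((kl.1 + kl.2 + 1).factorial : ℂ) ≠ 0 :=
          Nat.cast_ne_zero.mpr (Nat.factorial_ne_zero _)
        rw [← hkl']
        field_simp
    _ = ((n+1).factorial : ℂ)⁻¹ • ∑ kl ∈ Finset.HasAntidiagonal.antidiagonal n, A ^ kl.1 * (K * A ^ kl.2) := by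
        rw [Finset.smul_sum]

theorem duhamel_norm_ff_le (A : H →L[ℂ] H) {t : ℝ} (h : |1 - t| ≤ 1) (p : ℕ) :
    ‖ff A t p‖ ≤ (p.factorial : ℝ)⁻¹ * ‖A‖ ^ p := by
  rw [ff, norm_smul ((p.factorial:ℂ))⁻¹ (((1 - (t:ℂ)) • A) ^ p)]
  have h0 : ‖((p.factorial : ℂ))⁻¹‖ = (p.factorial : ℝ)⁻¹ := by
    simp
  rw [h0]
  refine mul_le_mul le_rfl ?_ (norm_nonneg _) (by positivity)
  refine (duhamel_clm_norm_pow_le _ _).trans ?_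
  have h1 : ‖(1 - (t:ℂ)) • A‖ ≤ ‖A‖ := by
    rw [norm_smul (1 - (t:ℂ)) A]
    have : ‖(1 - (t:ℂ))‖ ≤ 1 := by
      have : (1 - (t:ℂ)) = (((1 - t : ℝ)) : ℂ) := by push_cast; ring
      rw [this, Complex.norm_real, Real.norm_eq_abs]
      exact h
    nlinarith [norm_nonneg A]
  exact pow_le_pow_left₀ (norm_nonneg _) h1 p

theorem duhamel_norm_gg_le (A K : H →L[ℂ] H) {t : ℝ} (h : |t| ≤ 1) (q : ℕ) :
    ‖gg A K t q‖ ≤ ‖K‖ * ((q.factorial : ℝ)⁻¹ * ‖A‖ ^ q) := by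
  rw [gg]
  refine (norm_mul_le _ _).trans ?_
  refine mul_le_mul le_rfl ?_ (norm_nonneg _) (norm_nonneg _)
  rw [norm_smul ((q.factorial:ℂ))⁻¹ (((t:ℂ) • A) ^ q)]
  have h0 : ‖((q.factorial : ℂ))⁻¹‖ = (q.factorial : ℝ)⁻¹ := by simp
  rw [h0]
  refine mul_le_mul le_rfl ?_ (norm_nonneg _) (by positivity)
  refine (duhamel_clm_norm_pow_le _ _).trans ?_
  have h1 : ‖((t:ℂ)) • A‖ ≤ ‖A‖ := by
    rw [norm_smul ((t:ℂ)) A, Complex.norm_real, Real.norm_eq_abs]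
    nlinarith [norm_nonneg A, abs_nonneg t]
  exact pow_le_pow_left₀ (norm_nonneg _) h1 q

set_option synthInstance.maxHeartbeats 1000000 in
set_option maxHeartbeats 1000000 in
theorem duhamel_key_int (A K : H →L[ℂ] H) :
    HasSum (fun n => ((n+1).factorial : ℂ)⁻¹ •
        ∑ kl ∈ Finset.HasAntidiagonal.antidiagonal n, A ^ kl.1 * (K * A ^ kl.2))
      (∫ t in (0:ℝ)..1, (exp ((1 - (t:ℂ)) • A)).comp (K.comp (exp ((t:ℂ) • A)))) := by
  have hFF := duhamel_hasSum_FF A K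
  have hmain := intervalIntegral.hasSum_integral_of_dominated_convergence
    (μ := volume) (a := (0:ℝ)) (b := 1)
    (F := fun n t => ∑ kl ∈ Finset.HasAntidiagonal.antidiagonal n, ff A t kl.1 * gg A K t kl.2)
    (f := fun t => (exp ((1 - (t:ℂ)) • A)).comp (K.comp (exp ((t:ℂ) • A))))
    (bound := fun n _ => ‖K‖ * ((2 * ‖A‖) ^ n / n.factorial))
    (fun n => by
      apply Continuous.aestronglyMeasurable
      apply continuous_finset_sum
      intro kl _
      unfold ff gg
      fun_prop)
    (fun n => by
      filter_upwards with t ht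
      have ht' : t ∈ Set.Ioc (0:ℝ) 1 := by rwa [Set.uIoc_of_le zero_le_one] at ht
      have htabs : |t| ≤ 1 := by
        rw [abs_le]; exact ⟨by linarith [ht'.1], ht'.2⟩
      have ht1abs : |1 - t| ≤ 1 := by
        rw [abs_le]; exact ⟨by linarith [ht'.2], by linarith [ht'.1]⟩
      calc ‖∑ kl ∈ Finset.HasAntidiagonal.antidiagonal n, ff A t kl.1 * gg A K t kl.2‖
          ≤ ∑ kl ∈ Finset.HasAntidiagonal.antidiagonal n, ‖ff A t kl.1 * gg A K t kl.2‖ := norm_sum_le _ _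
        _ ≤ ∑ kl ∈ Finset.HasAntidiagonal.antidiagonal n,
              ((kl.1.factorial * kl.2.factorial : ℝ))⁻¹ * (‖A‖ ^ n * ‖K‖) := by
            refine Finset.sum_le_sum fun kl hkl => ?_
            have hkl' : kl.1 + kl.2 = n := Finset.HasAntidiagonal.mem_antidiagonal.mp hkl
            refine (norm_mul_le _ _).trans ?_
            refine (mul_le_mul (duhamel_norm_ff_le A ht1abs kl.1)
              (duhamel_norm_gg_le A K htabs kl.2)
              (norm_nonneg _) (by positivity)).trans (le_of_eq ?_)
            rw [← hkl', pow_add, mul_inv]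
            push_cast
            ring
        _ = ‖K‖ * ((2 * ‖A‖) ^ n / n.factorial) := by
            rw [← Finset.sum_mul, duhamel_sum_antidiag_factorial_inv, mul_pow]
            ring)
    (by filter_upwards with t ht
        exact ((Real.summable_pow_div_factorial (2 * ‖A‖)).mul_left _))
    (by apply _root_.intervalIntegrable_const)
    (by filter_upwards with t ht; exact hFF t)
  rw [show (fun n => ∫ t in (0:ℝ)..1,
      ∑ kl ∈ Finset.HasAntidiagonal.antidiagonal n, ff A t kl.1 * gg A K t kl.2)
    = fun n => ((n+1).factorial : ℂ)⁻¹ •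
      ∑ kl ∈ Finset.HasAntidiagonal.antidiagonal n, A ^ kl.1 * (K * A ^ kl.2)
    from funext fun n => duhamel_integral_FF A K n] at hmain
  exact hmain

theorem duhamel_shift_eq (A K : H →L[ℂ] H) (n : ℕ) :
    (((n+1).factorial : ℂ))⁻¹ •
        ∑ j ∈ Finset.range (n+1), A ^ j * (Complex.I • K) * A ^ (n + 1 - 1 - j)
      = Complex.I • (((n+1).factorial : ℂ)⁻¹ •
          ∑ kl ∈ Finset.HasAntidiagonal.antidiagonal n, A ^ kl.1 * (K * A ^ kl.2)) := by
  rw [Finset.Nat.sum_antidiagonal_eq_sum_range_succ_mk, smul_comm Complex.I, Finset.smul_sum]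
  simp only [Nat.add_sub_cancel, mul_assoc, mul_smul_comm, smul_mul_assoc, Finset.smul_sum]

end CLMSeries

section Commutator

variable {H : Type*} [NormedAddCommGroup H] [InnerProductSpace ℂ H]
    [CompleteSpace H]
    (B : H →ₗ.[ℂ] H) (C K : H →L[ℂ] H)
    (hdomC : ∀ x, x ∈ B.domain → C x ∈ B.domain)
    (hK : ∀ x : B.domain, K x = B ⟨C x, hdomC x x.2⟩ - C (B x))

include hK

theorem duhamel_comm1 : ∀ (x : H) (hx : x ∈ B.domain),
    ∃ h : (Complex.I • C) x ∈ B.domain,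
      B ⟨(Complex.I • C) x, h⟩ = (Complex.I • C) (B ⟨x, hx⟩) + (Complex.I • K) x := by
  intro x hx
  have hCx : C x ∈ B.domain := hdomC x hx
  have h : (Complex.I • C) x ∈ B.domain := by
    rw [ContinuousLinearMap.smul_apply]
    exact B.domain.smul_mem _ hCx
  refine ⟨h, ?_⟩
  have heq : (⟨(Complex.I • C) x, h⟩ : B.domain) = Complex.I • (⟨C x, hCx⟩ : B.domain) := by
    apply Subtype.ext
    simp
  rw [heq, B.map_smul]
  have := hK ⟨x, hx⟩
  simp only [LinearPMap.toFun_eq_coe] at *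
  rw [show B ⟨C x, hCx⟩ = K x + C (B ⟨x, hx⟩) by rw [hK ⟨x, hx⟩]; abel]
  simp [smul_add, add_comm]

theorem duhamel_powcomm : ∀ (m : ℕ) (x : H) (hx : x ∈ B.domain),
    ∃ h : ((Complex.I • C) ^ m) x ∈ B.domain,
      B ⟨((Complex.I • C) ^ m) x, h⟩ = ((Complex.I • C) ^ m) (B ⟨x, hx⟩)
        + (∑ j ∈ Finset.range m,
            (Complex.I • C) ^ j * (Complex.I • K) * (Complex.I • C) ^ (m - 1 - j)) x := by
  intro m
  induction m with
  | zero => intro x hx; exact ⟨hx, by simp⟩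
  | succ m ih =>
    intro x hx
    obtain ⟨hm, hBm⟩ := ih x hx
    obtain ⟨h1, hB1⟩ := duhamel_comm1 B C K hdomC hK (((Complex.I • C) ^ m) x) hm
    have hmem : ((Complex.I • C) ^ (m+1)) x ∈ B.domain := by
      rw [pow_succ']
      exact h1
    refine ⟨hmem, ?_⟩
    have hcoe : (⟨((Complex.I • C) ^ (m+1)) x, hmem⟩ : B.domain)
        = ⟨(Complex.I • C) (((Complex.I • C) ^ m) x), h1⟩ := by
      apply Subtype.ext
      simp [pow_succ']
    rw [hcoe, hB1, hBm]
    rw [Finset.sum_range_succ' (fun j => ((Complex.I • C) ^ j * (Complex.I • K) *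
      (Complex.I • C) ^ (m + 1 - 1 - j))) m]
    simp only [ContinuousLinearMap.add_apply, ContinuousLinearMap.sum_apply, map_add,
      map_sum, pow_zero, one_mul]
    have e1 : ∀ j, (Complex.I • C) ((((Complex.I • C) ^ j * (Complex.I • K) *
        (Complex.I • C) ^ (m - 1 - j))) x)
        = ((Complex.I • C) ^ (j+1) * (Complex.I • K) * (Complex.I • C) ^ (m + 1 - 1 - (j+1))) x := by
      intro j
      have : m + 1 - 1 - (j + 1) = m - 1 - j := by omega
      rw [this, pow_succ']
      rfl
    rw [show (Complex.I • C) ((((Complex.I • C) ^ m)) (B ⟨x, hx⟩))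
      = ((Complex.I • C) ^ (m+1)) (B ⟨x, hx⟩) by rw [pow_succ']; rfl]
    rw [Finset.sum_congr rfl (fun j _ => e1 j)]
    have : m + 1 - 1 - 0 = m := by omega
    rw [this]
    abel

end Commutator

/-- **Duhamel-type formula.** Let `B` be a densely-defined self-adjoint operator on a
complex separable Hilbert space `H`, and let `C` be a bounded operator such that the
commutator `[B, C]` (defined on `dom B`) has a bounded extension `K`.  Then `[B, e^{iC}]`
has a bounded extension, given by `i ∫₀¹ e^{i(1-t)C} [B,C] e^{itC} dt`; that is,
`e^{iC}` maps `dom B` into itself and on `dom B` one has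
`B e^{iC} x - e^{iC} B x = (i ∫₀¹ e^{i(1-t)C} K e^{itC} dt) x`. -/
theorem stmt3 {H : Type*} [NormedAddCommGroup H] [InnerProductSpace ℂ H]
    [CompleteSpace H] [TopologicalSpace.SeparableSpace H]
    (B : H →ₗ.[ℂ] H) (hB : IsSelfAdjoint B)
    (C K : H →L[ℂ] H)
    (hdomC : ∀ x, x ∈ B.domain → C x ∈ B.domain)
    (hK : ∀ x : B.domain, K x = B ⟨C x, hdomC x x.2⟩ - C (B x)) :
    ∃ hdomE : ∀ x, x ∈ B.domain → NormedSpace.exp (Complex.I • C) x ∈ B.domain,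
      ∀ x : B.domain,
        B ⟨NormedSpace.exp (Complex.I • C) x, hdomE x x.2⟩
            - NormedSpace.exp (Complex.I • C) (B x)
          = (Complex.I • ∫ t in (0:ℝ)..1,
              (NormedSpace.exp ((1 - (t : ℂ)) • (Complex.I • C))).comp
                (K.comp (NormedSpace.exp ((t : ℂ) • (Complex.I • C))))) x := by
  classical
  -- the series `c`
  set c : ℕ → (H →L[ℂ] H) := fun m => ((m.factorial : ℂ))⁻¹ •
    ∑ j ∈ Finset.range m, (Complex.I • C) ^ j * (Complex.I • K) * (Complex.I • C) ^ (m - 1 - j)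
    with hcdef
  have hkey := duhamel_key_int (Complex.I • C) K
  have hshift : ∀ n : ℕ, c (n+1) = Complex.I • (((n+1).factorial : ℂ)⁻¹ •
      ∑ kl ∈ Finset.HasAntidiagonal.antidiagonal n, (Complex.I • C) ^ kl.1 * (K * (Complex.I • C) ^ kl.2)) :=
    fun n => duhamel_shift_eq (Complex.I • C) K n
  have hsum1 : HasSum (fun n => c (n+1))
      (Complex.I • ∫ t in (0:ℝ)..1,
        (exp ((1 - (t : ℂ)) • (Complex.I • C))).comp
          (K.comp (exp ((t : ℂ) • (Complex.I • C))))) := by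
    rw [show (fun n => c (n+1)) = fun n => Complex.I • (((n+1).factorial : ℂ)⁻¹ •
      ∑ kl ∈ Finset.HasAntidiagonal.antidiagonal n, (Complex.I • C) ^ kl.1 * (K * (Complex.I • C) ^ kl.2))
      from funext hshift]
    exact hkey.const_smul Complex.I
  have hsc : Summable c := (summable_nat_add_iff 1).mp hsum1.summable
  have hc0 : c 0 = 0 := by simp [hcdef]
  have htsum : (∑' m, c m) = Complex.I • ∫ t in (0:ℝ)..1,
      (exp ((1 - (t : ℂ)) • (Complex.I • C))).comp
        (K.comp (exp ((t : ℂ) • (Complex.I • C)))) := by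
    rw [Summable.tsum_eq_zero_add hsc, hc0, zero_add, hsum1.tsum_eq]
  have powc := duhamel_powcomm B C K hdomC hK
  -- main pointwise statement
  have main : ∀ (x : H) (hx : x ∈ B.domain),
      ∃ h : exp (Complex.I • C) x ∈ B.domain,
        B ⟨exp (Complex.I • C) x, h⟩
          = exp (Complex.I • C) (B ⟨x, hx⟩) + (∑' m, c m) x := by
    intro x hx
    let u : ℕ → B.domain := fun m => ⟨((Complex.I • C) ^ m) x, (powc m x hx).choose⟩
    let S : ℕ → B.domain := fun N => ∑ m ∈ Finset.range N, ((m.factorial : ℂ))⁻¹ • u m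
    have hucoe : ∀ N, ((S N : H))
        = ∑ m ∈ Finset.range N, (((m.factorial : ℂ))⁻¹ • ((Complex.I • C) ^ m)) x := by
      intro N
      simp [S, u]
    have hexp1 : HasSum (fun m => (((m.factorial : ℂ))⁻¹ • ((Complex.I • C) ^ m)) x)
        (exp (Complex.I • C) x) := by
      have := (exp_series_hasSum_exp' (𝕂 := ℂ) (Complex.I • C)).mapL
        (ContinuousLinearMap.apply ℂ H x)
      simpa using this
    have hu : Filter.Tendsto (fun N => ((S N : H))) Filter.atTop
        (nhds (exp (Complex.I • C) x)) := by
      have h := hexp1.tendsto_sum_nat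
      rwa [show (fun N => ∑ m ∈ Finset.range N,
          (((m.factorial : ℂ))⁻¹ • ((Complex.I • C) ^ m)) x) = fun N => ((S N : H))
        from funext fun N => (hucoe N).symm] at h
    have hBu : ∀ m, B (u m) = ((Complex.I • C) ^ m) (B ⟨x, hx⟩)
        + (∑ j ∈ Finset.range m, (Complex.I • C) ^ j * (Complex.I • K) *
            (Complex.I • C) ^ (m - 1 - j)) x := fun m => (powc m x hx).choose_spec
    have hBS : ∀ N, B (S N)
        = (∑ m ∈ Finset.range N, ((m.factorial : ℂ))⁻¹ • ((Complex.I • C) ^ m)) (B ⟨x, hx⟩)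
          + (∑ m ∈ Finset.range N, c m) x := by
      intro N
      have h1 : B (S N) = ∑ m ∈ Finset.range N, ((m.factorial : ℂ))⁻¹ • B (u m) := by
        show B.toFun _ = _
        rw [map_sum]
        simp only [LinearMap.map_smul]
        rfl
      rw [h1]
      simp only [hBu, smul_add, Finset.sum_add_distrib]
      congr 1
      · simp [ContinuousLinearMap.sum_apply]
      · simp [hcdef, ContinuousLinearMap.sum_apply, ContinuousLinearMap.smul_apply]
    have hexp2 : Filter.Tendsto (fun N =>
        (∑ m ∈ Finset.range N, ((m.factorial : ℂ))⁻¹ • ((Complex.I • C) ^ m)) (B ⟨x, hx⟩))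
        Filter.atTop (nhds (exp (Complex.I • C) (B ⟨x, hx⟩))) := by
      have h := ((exp_series_hasSum_exp' (𝕂 := ℂ) (Complex.I • C)).mapL
        (ContinuousLinearMap.apply ℂ H (B ⟨x, hx⟩))).tendsto_sum_nat
      simp only [ContinuousLinearMap.apply_apply] at h
      rwa [show (fun N => ∑ m ∈ Finset.range N,
          (((m.factorial : ℂ))⁻¹ • ((Complex.I • C) ^ m)) (B ⟨x, hx⟩))
        = fun N => (∑ m ∈ Finset.range N,
          ((m.factorial : ℂ))⁻¹ • ((Complex.I • C) ^ m)) (B ⟨x, hx⟩)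
        from funext fun N => by simp [ContinuousLinearMap.sum_apply]] at h
    have hcx : Filter.Tendsto (fun N => (∑ m ∈ Finset.range N, c m) x)
        Filter.atTop (nhds ((∑' m, c m) x)) := by
      have h := (hsc.hasSum.mapL (ContinuousLinearMap.apply ℂ H x)).tendsto_sum_nat
      simp only [ContinuousLinearMap.apply_apply] at h
      rwa [show (fun N => ∑ m ∈ Finset.range N, (c m) x)
        = fun N => (∑ m ∈ Finset.range N, c m) x
        from funext fun N => by simp [ContinuousLinearMap.sum_apply]] at h
    have hv : Filter.Tendsto (fun N => B (S N)) Filter.atTop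
        (nhds (exp (Complex.I • C) (B ⟨x, hx⟩) + (∑' m, c m) x)) := by
      rw [show (fun N => B (S N)) = fun N =>
        (∑ m ∈ Finset.range N, ((m.factorial : ℂ))⁻¹ • ((Complex.I • C) ^ m)) (B ⟨x, hx⟩)
          + (∑ m ∈ Finset.range N, c m) x from funext hBS]
      exact hexp2.add hcx
    exact duhamel_sa_closed B hB S hu hv
  refine ⟨fun x hx => (main x hx).choose, fun x => ?_⟩
  obtain ⟨h, heq⟩ := main (x : H) x.2
  have hsub : (⟨exp (Complex.I • C) (x : H),
      (fun x hx => (main x hx).choose) (x : H) x.2⟩ : B.domain)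
    = ⟨exp (Complex.I • C) (x : H), h⟩ := rfl
  rw [hsub, heq, ← htsum]
  have : B ⟨(x : H), x.2⟩ = B x := rfl
  rw [this]
  abel
end

section
/- Let p > 0, let T be a compact operator on a Hilbert space with lim_{t→∞} t^{1/p} μ(t, T) = a existing, and let V be a compact operator with lim_{t→∞} t^{1/p} μ(t, V) = 0. Then lim_{t→∞} t^{1/p} μ(t, T+V) = a. -/
open MeasureTheory Filter Topology

/-- The `n`-th singular value (approximation number) of a bounded operator:
`μ(n,T) = inf{‖T - F‖ : rank F ≤ n}`. -/
noncomputable def approxNum {H : Type*} [NormedAddCommGroup H] [NormedSpace ℂ H]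
    (T : H →L[ℂ] H) (n : ℕ) : ℝ :=
  sInf ((fun F : H →L[ℂ] H => ‖T - F‖) ''
    {F | Module.rank ℂ (LinearMap.range (F : H →ₗ[ℂ] H)) ≤ n})

/-- The singular value function `μ(t,T) = μ(⌊t⌋,T)` of a real variable `t`. -/
noncomputable def svf {H : Type*} [NormedAddCommGroup H] [NormedSpace ℂ H]
    (T : H →L[ℂ] H) (t : ℝ) : ℝ :=
  approxNum T ⌊t⌋₊

section Aux

variable {H : Type*} [NormedAddCommGroup H] [NormedSpace ℂ H]

lemma approxSet_nonempty (T : H →L[ℂ] H) (n : ℕ) :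
    ((fun F : H →L[ℂ] H => ‖T - F‖) ''
      {F | Module.rank ℂ (LinearMap.range (F : H →ₗ[ℂ] H)) ≤ n}).Nonempty := by
  refine ⟨‖T - 0‖, 0, ?_, rfl⟩
  simp [Set.mem_setOf_eq]

lemma approxSet_bddBelow (T : H →L[ℂ] H) (n : ℕ) :
    BddBelow ((fun F : H →L[ℂ] H => ‖T - F‖) ''
      {F | Module.rank ℂ (LinearMap.range (F : H →ₗ[ℂ] H)) ≤ n}) := by
  refine ⟨0, ?_⟩
  rintro x ⟨F, -, rfl⟩
  exact norm_nonneg _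

lemma approxNum_le {T : H →L[ℂ] H} {n : ℕ} {F : H →L[ℂ] H}
    (hF : Module.rank ℂ (LinearMap.range (F : H →ₗ[ℂ] H)) ≤ n) :
    approxNum T n ≤ ‖T - F‖ :=
  csInf_le (approxSet_bddBelow T n) ⟨F, hF, rfl⟩

lemma le_approxNum {T : H →L[ℂ] H} {n : ℕ} {x : ℝ}
    (h : ∀ F : H →L[ℂ] H, Module.rank ℂ (LinearMap.range (F : H →ₗ[ℂ] H)) ≤ n →
      x ≤ ‖T - F‖) :
    x ≤ approxNum T n := by
  refine le_csInf (approxSet_nonempty T n) ?_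
  rintro y ⟨F, hF, rfl⟩
  exact h F hF

/-- Subadditivity of approximation numbers. -/
lemma approxNum_add_le (A B : H →L[ℂ] H) (m n : ℕ) :
    approxNum (A + B) (m + n) ≤ approxNum A m + approxNum B n := by
  have key : ∀ F : H →L[ℂ] H, Module.rank ℂ (LinearMap.range (F : H →ₗ[ℂ] H)) ≤ m →
      ∀ G : H →L[ℂ] H, Module.rank ℂ (LinearMap.range (G : H →ₗ[ℂ] H)) ≤ n →
      approxNum (A + B) (m + n) ≤ ‖A - F‖ + ‖B - G‖ := by
    intro F hF G hG
    have hrange : LinearMap.range ((F + G : H →L[ℂ] H) : H →ₗ[ℂ] H) ≤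
        LinearMap.range (F : H →ₗ[ℂ] H) ⊔ LinearMap.range (G : H →ₗ[ℂ] H) := by
      rintro x ⟨y, rfl⟩
      exact Submodule.mem_sup.mpr ⟨F y, ⟨y, rfl⟩, G y, ⟨y, rfl⟩, rfl⟩
    have hrank : Module.rank ℂ (LinearMap.range ((F + G : H →L[ℂ] H) : H →ₗ[ℂ] H))
        ≤ (m + n : ℕ) := by
      calc Module.rank ℂ (LinearMap.range ((F + G : H →L[ℂ] H) : H →ₗ[ℂ] H))
          ≤ Module.rank ℂ (LinearMap.range (F : H →ₗ[ℂ] H) ⊔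
              LinearMap.range (G : H →ₗ[ℂ] H) : Submodule ℂ H) :=
            Submodule.rank_mono hrange
        _ ≤ Module.rank ℂ (LinearMap.range (F : H →ₗ[ℂ] H)) +
              Module.rank ℂ (LinearMap.range (G : H →ₗ[ℂ] H)) :=
            Submodule.rank_add_le_rank_add_rank _ _
        _ ≤ (m : Cardinal) + (n : Cardinal) := add_le_add hF hG
        _ = ((m + n : ℕ) : Cardinal) := by push_cast; rfl
    have h1 : approxNum (A + B) (m + n) ≤ ‖(A + B) - (F + G)‖ := approxNum_le hrank
    have h2 : (A + B) - (F + G) = (A - F) + (B - G) := by abel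
    rw [h2] at h1
    exact h1.trans (norm_add_le _ _)
  have step1 : ∀ G : H →L[ℂ] H, Module.rank ℂ (LinearMap.range (G : H →ₗ[ℂ] H)) ≤ n →
      approxNum (A + B) (m + n) - ‖B - G‖ ≤ approxNum A m := by
    intro G hG
    refine le_approxNum fun F hF => ?_
    linarith [key F hF G hG]
  have step2 : approxNum (A + B) (m + n) - approxNum A m ≤ approxNum B n := by
    refine le_approxNum fun G hG => ?_
    linarith [step1 G hG]
  linarith

lemma approxNum_neg (V : H →L[ℂ] H) (n : ℕ) : approxNum (-V) n = approxNum V n := by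
  unfold approxNum
  congr 1
  ext x
  simp only [Set.mem_image, Set.mem_setOf_eq]
  constructor
  · rintro ⟨F, hF, rfl⟩
    refine ⟨-F, ?_, ?_⟩
    · rwa [ContinuousLinearMap.coe_neg, LinearMap.range_neg]
    · rw [show V - -F = -(-V - F) by abel, norm_neg]
  · rintro ⟨F, hF, rfl⟩
    refine ⟨-F, ?_, ?_⟩
    · rwa [ContinuousLinearMap.coe_neg, LinearMap.range_neg]
    · rw [show -V - -F = -(V - F) by abel, norm_neg]

lemma svf_natCast (X : H →L[ℂ] H) (k : ℕ) : svf X (k : ℝ) = approxNum X k := by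
  simp [svf]

end Aux

/-- If `g t / t → c > 0` then `g → ∞`. -/
lemma tendsto_atTop_of_div_nhds {g : ℝ → ℝ} {c : ℝ} (hc : 0 < c)
    (h : Filter.Tendsto (fun t => g t / t) atTop (𝓝 c)) : Filter.Tendsto g atTop atTop := by
  have h2 : ∀ᶠ t in atTop, c / 2 * t ≤ g t := by
    filter_upwards [h.eventually (eventually_ge_nhds (show c / 2 < c by linarith)),
      eventually_gt_atTop (0 : ℝ)] with t h1 ht
    calc c / 2 * t ≤ g t / t * t := by nlinarith
      _ = g t := by field_simp
  exact tendsto_atTop_mono' _ h2 (Tendsto.const_mul_atTop (half_pos hc) tendsto_id)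

lemma floor_mul_div_tendsto {c : ℝ} (hc : 0 < c) :
    Filter.Tendsto (fun t : ℝ => (⌊c * t⌋₊ : ℝ) / t) atTop (𝓝 c) := by
  have h1 : Filter.Tendsto (fun t : ℝ => ((⌊c * t⌋₊ : ℝ) / (c * t)) * c) atTop (𝓝 c) := by
    have h0 : Filter.Tendsto (fun t : ℝ => c * t) atTop atTop :=
      Tendsto.const_mul_atTop hc tendsto_id
    have := (tendsto_nat_floor_div_atTop (R := ℝ)).comp h0
    simpa using this.mul_const c
  refine Tendsto.congr' ?_ h1
  filter_upwards [eventually_gt_atTop (0 : ℝ)] with t ht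
  field_simp

lemma floor_mul_tendsto_atTop {c : ℝ} (hc : 0 < c) :
    Filter.Tendsto (fun t : ℝ => (⌊c * t⌋₊ : ℝ)) atTop atTop :=
  tendsto_natCast_atTop_atTop.comp
    (tendsto_nat_floor_atTop.comp (Tendsto.const_mul_atTop hc tendsto_id))

/-- Composition lemma: if `t^{1/p} f(t) → L` and `s(t)/t → c > 0`, `s → ∞`, then
`t^{1/p} f(s(t)) → c⁻¹^{1/p} L`. -/
lemma comp_aux {p c L : ℝ} (hp : 0 ≤ 1 / p) (hc : 0 < c) (f s : ℝ → ℝ)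
    (hf : Filter.Tendsto (fun t => t ^ (1 / p) * f t) atTop (𝓝 L))
    (hs : Filter.Tendsto s atTop atTop)
    (hsc : Filter.Tendsto (fun t => s t / t) atTop (𝓝 c)) :
    Filter.Tendsto (fun t => t ^ (1 / p) * f (s t)) atTop (𝓝 (c⁻¹ ^ (1 / p) * L)) := by
  have h1 : Filter.Tendsto (fun t => (s t) ^ (1 / p) * f (s t)) atTop (𝓝 L) := hf.comp hs
  have h2 : Filter.Tendsto (fun t => (s t / t)⁻¹) atTop (𝓝 c⁻¹) := hsc.inv₀ hc.ne'
  have h3 : Filter.Tendsto (fun t => (s t / t)⁻¹ ^ (1 / p)) atTop (𝓝 (c⁻¹ ^ (1 / p))) :=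
    h2.rpow_const (Or.inr hp)
  refine Tendsto.congr' ?_ (h3.mul h1)
  filter_upwards [eventually_gt_atTop (0 : ℝ), hs.eventually (eventually_gt_atTop (0 : ℝ))]
    with t ht hst
  rw [inv_div, ← mul_assoc, ← Real.mul_rpow (by positivity) hst.le,
    div_mul_cancel₀ _ hst.ne']

/-- **Ky Fan's lemma.** Let `p > 0`, let `T` be a compact operator with
`lim_{t→∞} t^{1/p} μ(t,T) = a`, and let `V` be compact with
`lim_{t→∞} t^{1/p} μ(t,V) = 0`.  Then `lim_{t→∞} t^{1/p} μ(t,T+V) = a`. -/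
theorem stmt13 {H : Type*} [NormedAddCommGroup H] [InnerProductSpace ℂ H]
    [CompleteSpace H]
    (p a : ℝ) (hp : 0 < p) (T V : H →L[ℂ] H)
    (hT : IsCompactOperator T) (hV : IsCompactOperator V)
    (hTlim : Tendsto (fun t : ℝ => t ^ (1 / p) * svf T t) atTop (𝓝 a))
    (hVlim : Tendsto (fun t : ℝ => t ^ (1 / p) * svf V t) atTop (𝓝 0)) :
    Tendsto (fun t : ℝ => t ^ (1 / p) * svf (T + V) t) atTop (𝓝 a) := by
  have hp' : (0 : ℝ) ≤ 1 / p := by positivity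
  rw [Metric.tendsto_nhds]
  intro δ hδ
  -- choose c₁ < 1 < c₂ near 1 via continuity of x ↦ x⁻¹^{1/p} * a at 1
  have hcont : Tendsto (fun x : ℝ => x⁻¹ ^ (1 / p) * a) (𝓝 1) (𝓝 a) := by
    have h1 : Tendsto (fun x : ℝ => x⁻¹) (𝓝 1) (𝓝 (1 : ℝ)) := by
      simpa using (tendsto_id (α := ℝ) (x := 𝓝 (1:ℝ))).inv₀ one_ne_zero
    have h2 := (h1.rpow_const (Or.inr hp')).mul_const a
    simpa using h2
  have hball : ∀ᶠ x : ℝ in 𝓝 1, dist (x⁻¹ ^ (1 / p) * a) a < δ / 2 :=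
    hcont.eventually (Metric.ball_mem_nhds a (half_pos hδ))
  rw [Metric.eventually_nhds_iff] at hball
  obtain ⟨r, hr, hballr⟩ := hball
  set c₁ : ℝ := 1 - min (r / 2) 2⁻¹ with hc₁def
  set c₂ : ℝ := 1 + r / 2 with hc₂def
  have hmin0 : 0 < min (r / 2) 2⁻¹ := lt_min (half_pos hr) (by norm_num)
  have hmin1 : min (r / 2) 2⁻¹ ≤ 2⁻¹ := min_le_right _ _
  have hc₁0 : 0 < c₁ := by
    have h2 : (2:ℝ)⁻¹ < 1 := by norm_num
    rw [hc₁def]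
    linarith [hmin1]
  have hc₁1 : c₁ < 1 := by rw [hc₁def]; linarith
  have hc₂1 : 1 < c₂ := by rw [hc₂def]; linarith
  have hd1 : dist (c₁⁻¹ ^ (1 / p) * a) a < δ / 2 := by
    apply hballr
    rw [Real.dist_eq, hc₁def]
    rw [abs_of_nonpos (by linarith)]
    have := min_le_left (r / 2) 2⁻¹
    linarith
  have hd2 : dist (c₂⁻¹ ^ (1 / p) * a) a < δ / 2 := by
    apply hballr
    rw [Real.dist_eq, hc₂def, abs_of_nonneg (by linarith)]
    linarith
  rw [Real.dist_eq] at hd1 hd2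
  have hd1' := abs_lt.mp hd1
  have hd2' := abs_lt.mp hd2
  -- Upper bound
  have U1 := comp_aux hp' hc₁0 (svf T) (fun t => (⌊c₁ * t⌋₊ : ℝ)) hTlim
    (floor_mul_tendsto_atTop hc₁0) (floor_mul_div_tendsto hc₁0)
  have hfl1 : Tendsto (fun t : ℝ => (⌊t⌋₊ : ℝ) / t) atTop (𝓝 1) :=
    tendsto_nat_floor_div_atTop
  have hs2c : Tendsto (fun t : ℝ => ((⌊t⌋₊ - ⌊c₁ * t⌋₊ : ℕ) : ℝ) / t) atTop (𝓝 (1 - c₁)) := by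
    refine Tendsto.congr' ?_ (hfl1.sub (floor_mul_div_tendsto hc₁0))
    filter_upwards [eventually_ge_atTop (0 : ℝ)] with t ht
    have hle : ⌊c₁ * t⌋₊ ≤ ⌊t⌋₊ := Nat.floor_mono (by nlinarith)
    rw [Nat.cast_sub hle, sub_div]
  have h1c₁ : 0 < 1 - c₁ := by linarith
  have U2 := comp_aux hp' h1c₁ (svf V) (fun t => ((⌊t⌋₊ - ⌊c₁ * t⌋₊ : ℕ) : ℝ)) hVlim
    (tendsto_atTop_of_div_nhds h1c₁ hs2c) hs2c
  rw [mul_zero] at U2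
  have U := U1.add U2
  rw [add_zero] at U
  have hUlt : ∀ᶠ t : ℝ in atTop,
      t ^ (1 / p) * svf T ((⌊c₁ * t⌋₊ : ℝ)) +
        t ^ (1 / p) * svf V (((⌊t⌋₊ - ⌊c₁ * t⌋₊ : ℕ) : ℝ)) < a + δ :=
    U.eventually_lt_const (by linarith [hd1'.2])
  have hineqU : ∀ᶠ t : ℝ in atTop,
      t ^ (1 / p) * svf (T + V) t ≤
        t ^ (1 / p) * svf T ((⌊c₁ * t⌋₊ : ℝ)) +
          t ^ (1 / p) * svf V (((⌊t⌋₊ - ⌊c₁ * t⌋₊ : ℕ) : ℝ)) := by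
    filter_upwards [eventually_ge_atTop (0 : ℝ)] with t ht
    have hle : ⌊c₁ * t⌋₊ ≤ ⌊t⌋₊ := Nat.floor_mono (by nlinarith)
    have key : approxNum (T + V) ⌊t⌋₊ ≤
        approxNum T ⌊c₁ * t⌋₊ + approxNum V (⌊t⌋₊ - ⌊c₁ * t⌋₊) := by
      have := approxNum_add_le T V ⌊c₁ * t⌋₊ (⌊t⌋₊ - ⌊c₁ * t⌋₊)
      rwa [Nat.add_sub_cancel' hle] at this
    have ht' : (0 : ℝ) ≤ t ^ (1 / p) := Real.rpow_nonneg ht _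
    simp only [svf, Nat.floor_natCast]
    calc t ^ (1 / p) * approxNum (T + V) ⌊t⌋₊
        ≤ t ^ (1 / p) * (approxNum T ⌊c₁ * t⌋₊ + approxNum V (⌊t⌋₊ - ⌊c₁ * t⌋₊)) :=
          mul_le_mul_of_nonneg_left key ht'
      _ = _ := mul_add _ _ _
  -- Lower bound
  set ε : ℝ := c₂ - 1 with hεdef
  have hε : 0 < ε := by rw [hεdef]; linarith
  have hs3c : Tendsto (fun t : ℝ => ((⌊t⌋₊ + ⌊ε * t⌋₊ : ℕ) : ℝ) / t) atTop (𝓝 c₂) := by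
    have := hfl1.add (floor_mul_div_tendsto hε)
    rw [show (1 : ℝ) + ε = c₂ by rw [hεdef]; ring] at this
    refine Tendsto.congr' ?_ this
    filter_upwards with t
    push_cast
    rw [add_div]
  have hc₂0 : 0 < c₂ := by linarith
  have L1 := comp_aux hp' hc₂0 (svf T) (fun t => ((⌊t⌋₊ + ⌊ε * t⌋₊ : ℕ) : ℝ)) hTlim
    (tendsto_atTop_of_div_nhds hc₂0 hs3c) hs3c
  have L2 := comp_aux hp' hε (svf V) (fun t => (⌊ε * t⌋₊ : ℝ)) hVlim
    (floor_mul_tendsto_atTop hε) (floor_mul_div_tendsto hε)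
  rw [mul_zero] at L2
  have Lsub := L1.sub L2
  rw [sub_zero] at Lsub
  have hLgt : ∀ᶠ t : ℝ in atTop,
      a - δ < t ^ (1 / p) * svf T (((⌊t⌋₊ + ⌊ε * t⌋₊ : ℕ) : ℝ)) -
        t ^ (1 / p) * svf V ((⌊ε * t⌋₊ : ℝ)) :=
    Lsub.eventually_const_lt (by linarith [hd2'.1])
  have hineqL : ∀ᶠ t : ℝ in atTop,
      t ^ (1 / p) * svf T (((⌊t⌋₊ + ⌊ε * t⌋₊ : ℕ) : ℝ)) -
        t ^ (1 / p) * svf V ((⌊ε * t⌋₊ : ℝ)) ≤ t ^ (1 / p) * svf (T + V) t := by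
    filter_upwards [eventually_ge_atTop (0 : ℝ)] with t ht
    have key : approxNum T (⌊t⌋₊ + ⌊ε * t⌋₊) ≤
        approxNum (T + V) ⌊t⌋₊ + approxNum V ⌊ε * t⌋₊ := by
      have := approxNum_add_le (T + V) (-V) ⌊t⌋₊ ⌊ε * t⌋₊
      rwa [show (T + V) + -V = T by abel, approxNum_neg] at this
    have ht' : (0 : ℝ) ≤ t ^ (1 / p) := Real.rpow_nonneg ht _
    simp only [svf, Nat.floor_natCast]
    have h2 : t ^ (1 / p) * approxNum T (⌊t⌋₊ + ⌊ε * t⌋₊) ≤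
        t ^ (1 / p) * approxNum (T + V) ⌊t⌋₊ + t ^ (1 / p) * approxNum V ⌊ε * t⌋₊ := by
      calc t ^ (1 / p) * approxNum T (⌊t⌋₊ + ⌊ε * t⌋₊)
          ≤ t ^ (1 / p) * (approxNum (T + V) ⌊t⌋₊ + approxNum V ⌊ε * t⌋₊) :=
            mul_le_mul_of_nonneg_left key ht'
        _ = _ := mul_add _ _ _
    linarith
  filter_upwards [hUlt, hineqU, hLgt, hineqL] with t h1 h2 h3 h4
  rw [Real.dist_eq, abs_sub_lt_iff]
  constructor <;> linarith
end
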